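/- arXiv:1712.01933 — 3 statements merged into one kernel-verified Lean document; each statement's English description precedes it below -/
import Mathlib

section
/- Let PP(κ) be the fixed-size partition polytope. Then a vector g ∈ ℝ^{k×n} is a circuit of PP(κ) if and only if g describes a single cyclical exchange of items among the clusters; consequently, every circuit walk in PP(κ) is an edge walk. -/
/-!
STATEMENT 17: A vector g ∈ ℝ^{k×n} is a circuit of the fixed-size partition polytope PP(κ)
iff g describes a single cyclical exchange of items among the clusters; consequently, every
circuit walk in PP(κ) is an edge walk.
-/

open Finset
open Fin.NatCast Fin.CommRing

/-- The fixed-size partition polytope `PP(κ) ⊆ ℝ^{k×n}`. -/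
def PPfixed {k n : ℕ} (κ : Fin k → ℕ) : Set (Fin k × Fin n → ℝ) :=
  {y | (∀ i, ∑ j, y (i, j) = (κ i : ℝ)) ∧
       (∀ j, ∑ i, y (i, j) = 1) ∧
       ∀ p, 0 ≤ y p}

/-- `g` is a circuit of the constraint system defining `PP(κ)`: a nonzero kernel element of the
equality constraints with coprime integer components such that `B g` is support-minimal,
where `B` collects the nonnegativity constraints. -/
def IsCircuitPPfixed {k n : ℕ} (g : Fin k × Fin n → ℝ) : Prop :=
  (∀ i, ∑ j, g (i, j) = 0) ∧ (∀ j, ∑ i, g (i, j) = 0) ∧ g ≠ 0 ∧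
  (∃ gz : Fin k × Fin n → ℤ, (∀ p, g p = (gz p : ℝ)) ∧ Finset.univ.gcd gz = 1) ∧
  ¬ ∃ y : Fin k × Fin n → ℝ,
      (∀ i, ∑ j, y (i, j) = 0) ∧ (∀ j, ∑ i, y (i, j) = 0) ∧ y ≠ 0 ∧
      {p | -(y p) ≠ 0} ⊂ {p | -(g p) ≠ 0}

/-- `g` describes a single cyclical exchange of items among distinct clusters
`c 0, …, c (m-1)` via distinct items `jj 0, …, jj (m-1)`. -/
def IsCyclicalExchange {k n : ℕ} (g : Fin k × Fin n → ℝ) : Prop :=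
  ∃ (m : ℕ) (hm : 2 ≤ m) (c : Fin m → Fin k) (jj : Fin m → Fin n),
    Function.Injective c ∧ Function.Injective jj ∧
    g = ∑ t : Fin m,
      (Pi.single (c ⟨(t.1 + 1) % m, Nat.mod_lt _ (by omega)⟩, jj t) (1 : ℝ) -
        Pi.single (c t, jj t) (1 : ℝ))

/-- A circuit walk: a sequence of points of `P` starting and ending at vertices,
each step a maximal step along a circuit direction. -/
def IsCircuitWalk {ι : Type*} (P : Set (ι → ℝ)) (Circ : (ι → ℝ) → Prop)
    {k : ℕ} (y : Fin (k + 1) → ι → ℝ) : Prop :=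
  y 0 ∈ P.extremePoints ℝ ∧ y (Fin.last k) ∈ P.extremePoints ℝ ∧
  ∀ i : Fin k, y i.castSucc ∈ P ∧
    ∃ (g : ι → ℝ) (α : ℝ), Circ g ∧ 0 < α ∧
      y i.succ = y i.castSucc + α • g ∧
      ∀ β : ℝ, α < β → y i.castSucc + β • g ∉ P

/-- A circuit walk is an edge walk if each of its segments is a one-dimensional face
(an edge) of `P`. -/
def IsEdgeWalk {ι : Type*} (P : Set (ι → ℝ)) {k : ℕ} (y : Fin (k + 1) → ι → ℝ) : Prop :=
  ∀ i : Fin k, y i.castSucc ≠ y i.succ ∧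
    IsExtreme ℝ P (segment ℝ (y i.castSucc) (y i.succ))



section CycVec

variable {k n m : ℕ}

/-- cyclic successor arithmetic -/
lemma mk_succ_eq [NeZero m] (t : Fin m) (h : (t.1 + 1) % m < m) :
    (⟨(t.1 + 1) % m, h⟩ : Fin m) = t + 1 := by
  apply Fin.ext
  simp [Fin.add_def, Fin.val_one']

/-- the cycle vector -/
def cycVec [NeZero m] (c : Fin m → Fin k) (jj : Fin m → Fin n) : Fin k × Fin n → ℝ :=
  ∑ t : Fin m, (Pi.single (c (t + 1), jj t) (1 : ℝ) - Pi.single (c t, jj t) (1 : ℝ))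

lemma sum_eq_cycVec [NeZero m] (hm : 2 ≤ m) (c : Fin m → Fin k) (jj : Fin m → Fin n) :
    (∑ t : Fin m,
      (Pi.single (c ⟨(t.1 + 1) % m, Nat.mod_lt _ (by omega)⟩, jj t) (1 : ℝ) -
        Pi.single (c t, jj t) (1 : ℝ))) = cycVec c jj := by
  unfold cycVec
  apply Finset.sum_congr rfl
  intro t _
  rw [mk_succ_eq]

lemma fin_succ_ne_self [NeZero m] (hm : 2 ≤ m) (t : Fin m) : t + 1 ≠ t := by
  intro h
  have h1 : ((t + 1 : Fin m) : ℕ) = ((t : Fin m) : ℕ) := by rw [h]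
  rw [Fin.add_def, Fin.val_one'] at h1
  simp only [Fin.val_mk] at h1
  have ht := t.2
  have h1m : 1 % m = 1 := Nat.mod_eq_of_lt (by omega)
  rw [h1m] at h1
  rcases Nat.lt_or_ge (t.1 + 1) m with h2 | h2
  · rw [Nat.mod_eq_of_lt h2] at h1; omega
  · have he : t.1 + 1 = m := by omega
    rw [he, Nat.mod_self] at h1
    omega

lemma sum_ite_eq_ind {α β : Type*} [Fintype α] [DecidableEq β] {f : α → β}
    (hf : Function.Injective f) (p : β) [Decidable (∃ t, p = f t)] :
    (∑ t, if p = f t then (1 : ℝ) else 0) = if ∃ t, p = f t then 1 else 0 := by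
  by_cases h : ∃ t, p = f t
  · obtain ⟨t, rfl⟩ := h
    rw [if_pos ⟨t, rfl⟩, Finset.sum_eq_single_of_mem t (Finset.mem_univ t)]
    · simp
    · intro b _ hb
      exact if_neg (fun he => hb (hf he.symm))
  · rw [if_neg h]
    exact Finset.sum_eq_zero (fun t _ => if_neg (fun he => h ⟨t, he⟩))

variable [NeZero m] {c : Fin m → Fin k} {jj : Fin m → Fin n}

open scoped Classical in
lemma cycVec_apply (hc : Function.Injective c) (hjj : Function.Injective jj)
    (p : Fin k × Fin n) :
    cycVec c jj p = (if ∃ t, p = (c (t + 1), jj t) then 1 else 0) -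
      (if ∃ t, p = (c t, jj t) then 1 else 0) := by
  unfold cycVec
  rw [Finset.sum_apply]
  have h1 : Function.Injective (fun t : Fin m => (c (t + 1), jj t)) := by
    intro a b h
    exact hjj (congrArg Prod.snd h)
  have h2 : Function.Injective (fun t : Fin m => (c t, jj t)) := by
    intro a b h
    exact hjj (congrArg Prod.snd h)
  simp only [Finset.sum_apply, Pi.sub_apply, Pi.single_apply]
  rw [Finset.sum_sub_distrib, sum_ite_eq_ind h1 p, sum_ite_eq_ind h2 p]

lemma not_both_forms (hm : 2 ≤ m) (hc : Function.Injective c) (hjj : Function.Injective jj)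
    {p : Fin k × Fin n} (h1 : ∃ t, p = (c (t + 1), jj t)) (h2 : ∃ t, p = (c t, jj t)) : False := by
  obtain ⟨t, rfl⟩ := h1
  obtain ⟨s, hs⟩ := h2
  have hj : jj s = jj t := (congrArg Prod.snd hs).symm
  have : s = t := hjj hj
  subst this
  have : s + 1 = s := hc (congrArg Prod.fst hs)
  exact fin_succ_ne_self hm s this

open scoped Classical in
lemma cycVec_minus (hm : 2 ≤ m) (hc : Function.Injective c) (hjj : Function.Injective jj)
    (t : Fin m) : cycVec c jj (c t, jj t) = -1 := by
  rw [cycVec_apply hc hjj]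
  rw [if_neg (fun h1 => not_both_forms hm hc hjj h1 ⟨t, rfl⟩), if_pos ⟨t, rfl⟩]
  ring

open scoped Classical in
lemma cycVec_plus (hm : 2 ≤ m) (hc : Function.Injective c) (hjj : Function.Injective jj)
    (t : Fin m) : cycVec c jj (c (t + 1), jj t) = 1 := by
  rw [cycVec_apply hc hjj]
  rw [if_pos ⟨t, rfl⟩, if_neg (fun h2 => not_both_forms hm hc hjj ⟨t, rfl⟩ h2)]
  ring

open scoped Classical in
lemma cycVec_zero' (hc : Function.Injective c) (hjj : Function.Injective jj)
    {p : Fin k × Fin n} (h1 : ¬ ∃ t, p = (c (t + 1), jj t)) (h2 : ¬ ∃ t, p = (c t, jj t)) :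
    cycVec c jj p = 0 := by
  rw [cycVec_apply hc hjj, if_neg h1, if_neg h2]
  ring

lemma cycVec_support (hc : Function.Injective c) (hjj : Function.Injective jj)
    {p : Fin k × Fin n} (h : cycVec c jj p ≠ 0) :
    (∃ t, p = (c (t + 1), jj t)) ∨ (∃ t, p = (c t, jj t)) := by
  classical
  by_contra hcon
  push_neg at hcon
  exact h (cycVec_zero' hc hjj (fun ⟨t, ht⟩ => hcon.1 t ht) (fun ⟨t, ht⟩ => hcon.2 t ht))

lemma sum_prod_ite (a : Fin k) (b : Fin n) (i : Fin k) :
    (∑ j, if (i, j) = (a, b) then (1:ℝ) else 0) = if i = a then 1 else 0 := by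
  classical
  by_cases h : i = a
  · subst h
    rw [if_pos rfl]
    have : ∀ j : Fin n, (if (i, j) = (i, b) then (1:ℝ) else 0) = if j = b then 1 else 0 := by
      intro j; congr 1; simp [Prod.ext_iff]
    simp only [this]
    simp
  · rw [if_neg h]
    exact Finset.sum_eq_zero (fun j _ => if_neg (by simp [Prod.ext_iff, h]))

lemma sum_prod_ite' (a : Fin k) (b : Fin n) (j : Fin n) :
    (∑ i, if (i, j) = (a, b) then (1:ℝ) else 0) = if j = b then 1 else 0 := by
  classical
  by_cases h : j = b
  · subst h
    rw [if_pos rfl]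
    have : ∀ i : Fin k, (if (i, j) = (a, j) then (1:ℝ) else 0) = if i = a then 1 else 0 := by
      intro i; congr 1; simp [Prod.ext_iff]
    simp only [this]
    simp
  · rw [if_neg h]
    exact Finset.sum_eq_zero (fun i _ => if_neg (by simp [Prod.ext_iff, h]))

lemma cycVec_rowsum (i : Fin k) : ∑ j, cycVec c jj (i, j) = 0 := by
  classical
  unfold cycVec
  simp only [Finset.sum_apply, Pi.sub_apply, Pi.single_apply]
  rw [Finset.sum_comm]
  have : ∀ t : Fin m, (∑ j, ((if (i, j) = (c (t+1), jj t) then (1:ℝ) else 0) -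
      (if (i, j) = (c t, jj t) then (1:ℝ) else 0))) =
      (if i = c (t+1) then (1:ℝ) else 0) - (if i = c t then 1 else 0) := by
    intro t
    rw [Finset.sum_sub_distrib, sum_prod_ite, sum_prod_ite]
  rw [Finset.sum_congr rfl (fun t _ => this t), Finset.sum_sub_distrib]
  have hre : (∑ t : Fin m, if i = c (t+1) then (1:ℝ) else 0) = ∑ t : Fin m, if i = c t then 1 else 0 :=
    Fintype.sum_equiv (Equiv.addRight 1) _ _ (fun t => rfl)
  rw [hre, sub_self]

lemma cycVec_colsum (j : Fin n) : ∑ i, cycVec c jj (i, j) = 0 := by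
  classical
  unfold cycVec
  simp only [Finset.sum_apply, Pi.sub_apply, Pi.single_apply]
  rw [Finset.sum_comm]
  have : ∀ t : Fin m, (∑ i, ((if (i, j) = (c (t+1), jj t) then (1:ℝ) else 0) -
      (if (i, j) = (c t, jj t) then (1:ℝ) else 0))) = 0 := by
    intro t
    rw [Finset.sum_sub_distrib, sum_prod_ite', sum_prod_ite', sub_self]
  rw [Finset.sum_congr rfl (fun t _ => this t), Finset.sum_const, smul_zero]

lemma cyclic_induction {Q : Fin m → Prop} (h : ∀ t, Q t → Q (t + 1)) {t0 : Fin m}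
    (h0 : Q t0) : ∀ u, Q u := by
  have key : ∀ s : ℕ, Q (t0 + (s : Fin m)) := by
    intro s
    induction s with
    | zero => simpa using h0
    | succ s ih =>
        have he : ((((s : ℕ) + 1 : ℕ)) : Fin m) = ((s : ℕ) : Fin m) + 1 := by push_cast; ring
        rw [he, ← add_assoc]
        exact h _ ih
  intro u
  have := key (u - t0).val
  rwa [Fin.cast_val_eq_self, add_comm, sub_add_cancel] at this

end CycVec

section CycleExtraction

variable {k n : ℕ}

lemma exists_cycle (S : Set (Fin k × Fin n))
    (hrow : ∀ p ∈ S, ∃ j', j' ≠ p.2 ∧ (p.1, j') ∈ S)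
    (hcol : ∀ p ∈ S, ∃ i', i' ≠ p.1 ∧ (i', p.2) ∈ S)
    {p0 : Fin k × Fin n} (hp0 : p0 ∈ S) :
    ∃ (m : ℕ) (hm : 2 ≤ m) (c : Fin m → Fin k) (jj : Fin m → Fin n),
      Function.Injective c ∧ Function.Injective jj ∧
      (∀ t, (c t, jj t) ∈ S) ∧
      (∀ t : Fin m, (c ⟨(t.1 + 1) % m, Nat.mod_lt _ (by omega)⟩, jj t) ∈ S) := by
  classical
  haveI : ∀ (P : ℕ → Prop), DecidablePred P := fun P => Classical.decPred P
  have hstep : ∀ p : {x // x ∈ S}, ∃ p' : {x // x ∈ S},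
      p'.1.1 ≠ p.1.1 ∧ p'.1.2 ≠ p.1.2 ∧ (p'.1.1, p.1.2) ∈ S := by
    rintro ⟨⟨i, j⟩, hij⟩
    obtain ⟨i', hi1, hi2⟩ := hcol (i, j) hij
    obtain ⟨j', hj1, hj2⟩ := hrow (i', j) hi2
    exact ⟨⟨(i', j'), hj2⟩, hi1, hj1, hi2⟩
  choose F hF1 hF2 hF3 using hstep
  set seq : ℕ → {x // x ∈ S} := fun t => F^[t] ⟨p0, hp0⟩ with hseqdef
  set r : ℕ → Fin k := fun t => (seq t).1.1 with hrdef
  set q : ℕ → Fin n := fun t => (seq t).1.2 with hqdef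
  have hmem : ∀ t, (r t, q t) ∈ S := fun t => by
    have := (seq t).2
    simpa [hrdef, hqdef] using this
  have hsucc : ∀ t, seq (t + 1) = F (seq t) := fun t => Function.iterate_succ_apply' F t _
  have hrne : ∀ t, r (t + 1) ≠ r t := fun t => by
    rw [hrdef]; simp only; rw [hsucc t]; exact hF1 (seq t)
  have hqne : ∀ t, q (t + 1) ≠ q t := fun t => by
    rw [hqdef]; simp only; rw [hsucc t]; exact hF2 (seq t)
  have hcross : ∀ t, (r (t + 1), q t) ∈ S := fun t => by
    have := hF3 (seq t)
    rw [hrdef, hqdef]; simp only; rw [hsucc t]; exact this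
  have hex : ∃ T, (∃ s < T, r s = r T) ∨ (∃ s < T, q s = q T) := by
    obtain ⟨a, b, hab, he⟩ := Fintype.exists_ne_map_eq_of_card_lt
      (fun t : Fin (k + 1) => r t.val) (by simp)
    rcases Nat.lt_or_ge a.val b.val with h | h
    · exact ⟨b.val, Or.inl ⟨a.val, h, he⟩⟩
    · have hba : b.val < a.val := by
        rcases Nat.lt_or_ge b.val a.val with h2 | h2
        · exact h2
        · exact absurd (Fin.ext (by omega)) hab
      exact ⟨a.val, Or.inl ⟨b.val, hba, he.symm⟩⟩
  have hT := Nat.find_spec hex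
  set T := Nat.find hex with hTdef
  have hTmin : ∀ t < T, ¬((∃ s < t, r s = r t) ∨ (∃ s < t, q s = q t)) :=
    fun t ht => Nat.find_min hex ht
  have hrinj : ∀ s t, s < t → t < T → r s ≠ r t := by
    intro s t hst htT he
    exact hTmin t htT (Or.inl ⟨s, hst, he⟩)
  have hqinj : ∀ s t, s < t → t < T → q s ≠ q t := by
    intro s t hst htT he
    exact hTmin t htT (Or.inr ⟨s, hst, he⟩)
  by_cases hL : ∃ s < T, r s = r T
  · -- row repeat case
    obtain ⟨s, hsT, hrs⟩ := hL
    set m := T - s with hmdef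
    have hm : 2 ≤ m := by
      rcases Nat.lt_or_ge (s + 1) T with h | h
      · omega
      · exfalso
        have he : T = s + 1 := by omega
        rw [he] at hrs
        exact hrne s hrs.symm
    refine ⟨m, hm, fun u => r (s + u.val), fun u => q (s + u.val), ?_, ?_, ?_, ?_⟩
    · intro u v huv
      by_contra hne
      have hv : u.val ≠ v.val := fun h => hne (Fin.ext h)
      have h1 : s + u.val < T := by have := u.2; omega
      have h2 : s + v.val < T := by have := v.2; omega
      rcases Nat.lt_or_ge u.val v.val with h | h
      · exact hrinj (s + u.val) (s + v.val) (by omega) h2 huv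
      · exact hrinj (s + v.val) (s + u.val) (by omega) h1 huv.symm
    · intro u v huv
      by_contra hne
      have hv : u.val ≠ v.val := fun h => hne (Fin.ext h)
      have h1 : s + u.val < T := by have := u.2; omega
      have h2 : s + v.val < T := by have := v.2; omega
      rcases Nat.lt_or_ge u.val v.val with h | h
      · exact hqinj (s + u.val) (s + v.val) (by omega) h2 huv
      · exact hqinj (s + v.val) (s + u.val) (by omega) h1 huv.symm
    · intro u; exact hmem _
    · intro u
      show (r (s + ((u.val + 1) % m)), q (s + u.val)) ∈ S
      rcases Nat.lt_or_ge (u.val + 1) m with h | h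
      · rw [Nat.mod_eq_of_lt h]
        have he2 : s + (u.val + 1) = (s + u.val) + 1 := by omega
        rw [he2]
        exact hcross (s + u.val)
      · have hu : u.val = m - 1 := by have := u.2; omega
        have he : (u.val + 1) % m = 0 := by
          rw [hu]
          have h2 : m - 1 + 1 = m := by omega
          rw [h2, Nat.mod_self]
        rw [he]
        have h1 : s + (0 : ℕ) = s := by omega
        have h2 : s + u.val = T - 1 := by omega
        rw [h1, h2]
        have hT1 : T - 1 + 1 = T := by omega
        have hc2 := hcross (T - 1)
        rw [hT1] at hc2
        rw [hrs]
        exact hc2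
  · -- column repeat case
    obtain ⟨s, hsT, hqs⟩ := hT.resolve_left hL
    have hrinj2 : ∀ a b, a < b → b ≤ T → r a ≠ r b := by
      intro a b hab hbT he
      rcases Nat.lt_or_ge b T with h | h
      · exact hrinj a b hab h he
      · have hbt : b = T := by omega
        subst hbt
        exact hL ⟨a, hab, he⟩
    set m := T - s with hmdef
    have hm : 2 ≤ m := by
      rcases Nat.lt_or_ge (s + 1) T with h | h
      · omega
      · exfalso
        have he : T = s + 1 := by omega
        rw [he] at hqs
        exact hqne s hqs.symm
    refine ⟨m, hm, fun u => r (s + u.val + 1), fun u => q (s + u.val + 1), ?_, ?_, ?_, ?_⟩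
    · intro u v huv
      by_contra hne
      have hv : u.val ≠ v.val := fun h => hne (Fin.ext h)
      have h1 : s + u.val + 1 ≤ T := by have := u.2; omega
      have h2 : s + v.val + 1 ≤ T := by have := v.2; omega
      rcases Nat.lt_or_ge u.val v.val with h | h
      · exact hrinj2 (s + u.val + 1) (s + v.val + 1) (by omega) h2 huv
      · exact hrinj2 (s + v.val + 1) (s + u.val + 1) (by omega) h1 huv.symm
    · intro u v huv
      have huv' : q (s + u.val + 1) = q (s + v.val + 1) := huv
      by_contra hne
      have hv : u.val ≠ v.val := fun h => hne (Fin.ext h)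
      rcases Nat.lt_or_ge u.val v.val with h | h
      · rcases Nat.lt_or_ge (s + v.val + 1) T with hv2 | hv2
        · exact hqinj (s + u.val + 1) (s + v.val + 1) (by omega) hv2 huv'
        · have hvT : s + v.val + 1 = T := by have := v.2; omega
          rw [hvT, ← hqs] at huv'
          exact hqinj s (s + u.val + 1) (by omega) (by omega) huv'.symm
      · rcases Nat.lt_or_ge (s + u.val + 1) T with hu2 | hu2
        · exact hqinj (s + v.val + 1) (s + u.val + 1) (by omega) hu2 huv'.symm
        · have huT : s + u.val + 1 = T := by have := u.2; omega
          rw [huT, ← hqs] at huv'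
          exact hqinj s (s + v.val + 1) (by omega) (by omega) huv'
    · intro u; exact hmem _
    · intro u
      show (r (s + ((u.val + 1) % m) + 1), q (s + u.val + 1)) ∈ S
      rcases Nat.lt_or_ge (u.val + 1) m with h | h
      · rw [Nat.mod_eq_of_lt h]
        have he2 : s + (u.val + 1) + 1 = (s + u.val + 1) + 1 := by omega
        rw [he2]
        exact hcross (s + u.val + 1)
      · have hu : u.val = m - 1 := by have := u.2; omega
        have he : (u.val + 1) % m = 0 := by
          rw [hu]
          have h2 : m - 1 + 1 = m := by omega
          rw [h2, Nat.mod_self]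
        rw [he]
        have h2 : s + u.val + 1 = T := by omega
        rw [h2]
        have h1 : s + (0:ℕ) + 1 = s + 1 := by omega
        rw [h1]
        rw [← hqs]
        exact hcross s

end CycleExtraction

section Part1

variable {k n : ℕ}

/-- every occupied row/column of a kernel element has a second occupied cell -/
lemma kernel_row_degree {y : Fin k × Fin n → ℝ} (hrow : ∀ i, ∑ j, y (i, j) = 0) :
    ∀ p ∈ {p : Fin k × Fin n | y p ≠ 0}, ∃ j', j' ≠ p.2 ∧ (p.1, j') ∈ {p | y p ≠ 0} := by
  rintro ⟨i, j⟩ hp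
  by_contra hcon
  push_neg at hcon
  have hz : ∀ b ∈ Finset.univ, b ≠ j → y (i, b) = 0 := by
    intro b _ hb
    by_contra hyb
    exact (hcon b hb) hyb
  have := Finset.sum_eq_single_of_mem j (Finset.mem_univ j) hz
  rw [hrow i] at this
  exact hp this.symm

lemma kernel_col_degree {y : Fin k × Fin n → ℝ} (hcol : ∀ j, ∑ i, y (i, j) = 0) :
    ∀ p ∈ {p : Fin k × Fin n | y p ≠ 0}, ∃ i', i' ≠ p.1 ∧ (i', p.2) ∈ {p | y p ≠ 0} := by
  rintro ⟨i, j⟩ hp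
  by_contra hcon
  push_neg at hcon
  have hz : ∀ b ∈ Finset.univ, b ≠ i → y (b, j) = 0 := by
    intro b _ hb
    by_contra hyb
    exact (hcon b hb) hyb
  have := Finset.sum_eq_single_of_mem i (Finset.mem_univ i) hz
  rw [hcol j] at this
  exact hp this.symm

lemma cycVec_ne_zero {m : ℕ} [NeZero m] (hm : 2 ≤ m) {c : Fin m → Fin k} {jj : Fin m → Fin n}
    (hc : Function.Injective c) (hjj : Function.Injective jj) : cycVec c jj ≠ 0 := by
  intro h
  have := congrFun h (c 0, jj 0)
  rw [cycVec_minus hm hc hjj 0] at this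
  norm_num at this

/-- direction ⇐ : a cyclical exchange is a circuit (abstract form using cycVec) -/
lemma cycVec_is_circuit {m : ℕ} [NeZero m] (hm : 2 ≤ m) {c : Fin m → Fin k}
    {jj : Fin m → Fin n} (hc : Function.Injective c) (hjj : Function.Injective jj) :
    (∀ i, ∑ j, cycVec c jj (i, j) = 0) ∧ (∀ j, ∑ i, cycVec c jj (i, j) = 0) ∧
    cycVec c jj ≠ 0 ∧
    (∃ gz : Fin k × Fin n → ℤ, (∀ p, cycVec c jj p = (gz p : ℝ)) ∧ Finset.univ.gcd gz = 1) ∧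
    ¬ ∃ y : Fin k × Fin n → ℝ,
      (∀ i, ∑ j, y (i, j) = 0) ∧ (∀ j, ∑ i, y (i, j) = 0) ∧ y ≠ 0 ∧
      {p | -(y p) ≠ 0} ⊂ {p | -(cycVec c jj p) ≠ 0} := by
  classical
  refine ⟨cycVec_rowsum, cycVec_colsum, cycVec_ne_zero hm hc hjj, ?_, ?_⟩
  · -- integer representative with gcd 1
    refine ⟨fun p => if ∃ t, p = (c (t + 1), jj t) then 1 else
      if ∃ t, p = (c t, jj t) then -1 else 0, ?_, ?_⟩
    · intro p
      beta_reduce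
      rw [cycVec_apply hc hjj]
      by_cases h1 : ∃ t, p = (c (t + 1), jj t)
      · by_cases h2 : ∃ t, p = (c t, jj t)
        · exact absurd h2 (fun h2' => not_both_forms hm hc hjj h1 h2')
        · rw [if_pos h1, if_neg h2, if_pos h1]
          norm_num
      · by_cases h2 : ∃ t, p = (c t, jj t)
        · rw [if_neg h1, if_pos h2, if_neg h1, if_pos h2]
          norm_num
        · rw [if_neg h1, if_neg h2, if_neg h1, if_neg h2]
          norm_num
    · -- gcd = 1
      have hmem : ((c 0 + 1 : Fin m).val, 0) = ((c 0 + 1 : Fin m).val, 0) := rfl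
      have hdvd : Finset.univ.gcd (fun p => if ∃ t, p = (c (t + 1), jj t) then (1:ℤ) else
          if ∃ t, p = (c t, jj t) then -1 else 0) ∣ 1 := by
        have h := Finset.gcd_dvd (Finset.mem_univ ((c (0 + 1), jj 0) : Fin k × Fin n))
          (f := fun p => if ∃ t, p = (c (t + 1), jj t) then (1:ℤ) else
            if ∃ t, p = (c t, jj t) then -1 else 0)
        beta_reduce at h
        rw [if_pos ⟨0, rfl⟩] at h
        exact h
      have hunit : IsUnit (Finset.univ.gcd (fun p => if ∃ t, p = (c (t + 1), jj t) then (1:ℤ) else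
          if ∃ t, p = (c t, jj t) then -1 else 0)) := isUnit_of_dvd_one hdvd
      rw [← Finset.normalize_gcd]
      exact normalize_eq_one.mpr hunit
  · -- support minimality
    rintro ⟨y, hyr, hyc, hy0, hss⟩
    have hss' : {p | y p ≠ 0} ⊂ {p | cycVec c jj p ≠ 0} := by
      simpa [neg_ne_zero] using hss
    have hsub := hss'.1
    obtain ⟨p0, hp0⟩ := Function.ne_iff.mp hy0
    have hrowd := kernel_row_degree hyr
    have hcold := kernel_col_degree hyc
    -- membership propagation
    have hAB : ∀ t, y (c t, jj t) ≠ 0 → y (c (t + 1), jj t) ≠ 0 := by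
      intro t ht
      obtain ⟨i', hi1, hi2⟩ := hcold (c t, jj t) ht
      have := hsub hi2
      rcases cycVec_support hc hjj this with ⟨s, hs⟩ | ⟨s, hs⟩
      · have hjs : jj t = jj s := congrArg Prod.snd hs
        have hst : s = t := hjj hjs.symm
        subst hst
        have : i' = c (s + 1) := congrArg Prod.fst hs
        rwa [← this]
      · have hjs : jj t = jj s := congrArg Prod.snd hs
        have hst : s = t := hjj hjs.symm
        subst hst
        have : i' = c s := congrArg Prod.fst hs
        rw [this] at hi1
        exact absurd rfl hi1
    have hBA : ∀ t, y (c (t + 1), jj t) ≠ 0 → y (c (t + 1), jj (t + 1)) ≠ 0 := by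
      intro t ht
      obtain ⟨j', hj1, hj2⟩ := hrowd (c (t + 1), jj t) ht
      have := hsub hj2
      rcases cycVec_support hc hjj this with ⟨s, hs⟩ | ⟨s, hs⟩
      · have : c (t + 1) = c (s + 1) := congrArg Prod.fst hs
        have hst : s = t := (add_left_injective 1 (hc this)).symm
        subst hst
        have : j' = jj s := congrArg Prod.snd hs
        rw [this] at hj1
        exact absurd rfl hj1
      · have hcs : c (t + 1) = c s := congrArg Prod.fst hs
        have hst : s = t + 1 := (hc hcs).symm
        subst hst
        have : j' = jj (t + 1) := congrArg Prod.snd hs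
        rwa [← this]
    have hA : ∀ t, y (c t, jj t) ≠ 0 → y (c (t + 1), jj (t + 1)) ≠ 0 :=
      fun t ht => hBA t (hAB t ht)
    -- find a starting point
    have hstart : ∃ t1, y (c t1, jj t1) ≠ 0 := by
      rcases cycVec_support hc hjj (hsub hp0) with ⟨s, hs⟩ | ⟨s, hs⟩
      · rw [hs] at hp0
        exact ⟨s + 1, hBA s hp0⟩
      · rw [hs] at hp0
        exact ⟨s, hp0⟩
    obtain ⟨t1, ht1⟩ := hstart
    have hallA : ∀ u, y (c u, jj u) ≠ 0 := cyclic_induction hA ht1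
    have hallB : ∀ u, y (c (u + 1), jj u) ≠ 0 := fun u => hAB u (hallA u)
    -- so supp y ⊇ supp cycVec, contradiction
    have : {p : Fin k × Fin n | cycVec c jj p ≠ 0} ⊆ {p | y p ≠ 0} := by
      intro p hp
      rcases cycVec_support hc hjj hp with ⟨s, hs⟩ | ⟨s, hs⟩
      · rw [hs]; exact hallB s
      · rw [hs]; exact hallA s
    exact hss'.2 this

end Part1

section Main1

variable {k n : ℕ}

theorem circuit_of_cyc {g : Fin k × Fin n → ℝ} (h : IsCyclicalExchange g) :
    IsCircuitPPfixed g := by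
  obtain ⟨m, hm, c, jj, hc, hjj, hg⟩ := h
  haveI : NeZero m := ⟨by omega⟩
  rw [sum_eq_cycVec hm c jj] at hg
  subst hg
  exact cycVec_is_circuit hm hc hjj

theorem cyc_of_circuit {g : Fin k × Fin n → ℝ} (h : IsCircuitPPfixed g) :
    IsCyclicalExchange g := by
  classical
  obtain ⟨hrow, hcol, hg0, ⟨gz, hgz, hgcd⟩, hmin⟩ := h
  obtain ⟨p0, hp0⟩ := Function.ne_iff.mp hg0
  -- extract a cycle from the support of g
  obtain ⟨m, hm, c, jj, hc, hjj, hcell1, hcell2⟩ :=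
    exists_cycle {p | g p ≠ 0} (kernel_row_degree hrow) (kernel_col_degree hcol) hp0
  haveI : NeZero m := ⟨by omega⟩
  have hcell2' : ∀ t : Fin m, (c (t + 1), jj t) ∈ {p | g p ≠ 0} := by
    intro t
    have := hcell2 t
    rwa [mk_succ_eq] at this
  -- the cycle vector has support inside supp g
  have hsub : {p | cycVec c jj p ≠ 0} ⊆ {p | g p ≠ 0} := by
    intro p hp
    rcases cycVec_support hc hjj hp with ⟨s, hs⟩ | ⟨s, hs⟩
    · rw [hs]; exact hcell2' s
    · rw [hs]; exact hcell1 s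
  -- by minimality, supports are equal
  have hsupp : {p | cycVec c jj p ≠ 0} = {p | g p ≠ 0} := by
    by_contra hne
    apply hmin
    refine ⟨cycVec c jj, cycVec_rowsum, cycVec_colsum, cycVec_ne_zero hm hc hjj, ?_⟩
    have : {p | cycVec c jj p ≠ 0} ⊂ {p | g p ≠ 0} := ⟨hsub, fun h => hne (le_antisymm hsub h)⟩
    simpa [neg_ne_zero] using this
  -- column / row pair relations
  have hpcol : ∀ t : Fin m, g (c t, jj t) + g (c (t + 1), jj t) = 0 := by
    intro t
    have hsum := hcol (jj t)
    have hz : ∀ i ∈ Finset.univ, i ∉ ({c t, c (t + 1)} : Finset (Fin k)) → g (i, jj t) = 0 := by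
      intro i _ hi
      by_contra hgi
      have : (i, jj t) ∈ {p : Fin k × Fin n | cycVec c jj p ≠ 0} := hsupp ▸ hgi
      rcases cycVec_support hc hjj this with ⟨s, hs⟩ | ⟨s, hs⟩
      · have : jj t = jj s := congrArg Prod.snd hs
        have hst : s = t := hjj this.symm
        subst hst
        have : i = c (s + 1) := congrArg Prod.fst hs
        exact hi (by rw [this]; simp)
      · have : jj t = jj s := congrArg Prod.snd hs
        have hst : s = t := hjj this.symm
        subst hst
        have : i = c s := congrArg Prod.fst hs
        exact hi (by rw [this]; simp)
    have hcne : c t ≠ c (t + 1) := fun h => fin_succ_ne_self hm t (hc h.symm)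
    have := (Finset.sum_subset (Finset.subset_univ ({c t, c (t + 1)} : Finset (Fin k)))
      (fun i hi hni => hz i hi hni)).symm
    rw [hsum] at this
    rw [Finset.sum_pair hcne] at this
    exact this.symm
  have hprow : ∀ t : Fin m, g (c (t + 1), jj t) + g (c (t + 1), jj (t + 1)) = 0 := by
    intro t
    have hsum := hrow (c (t + 1))
    have hz : ∀ j ∈ Finset.univ, j ∉ ({jj t, jj (t + 1)} : Finset (Fin n)) →
        g (c (t + 1), j) = 0 := by
      intro j _ hj
      by_contra hgj
      have : (c (t + 1), j) ∈ {p : Fin k × Fin n | cycVec c jj p ≠ 0} := hsupp ▸ hgj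
      rcases cycVec_support hc hjj this with ⟨s, hs⟩ | ⟨s, hs⟩
      · have : c (t + 1) = c (s + 1) := congrArg Prod.fst hs
        have hst : s = t := (add_left_injective 1 (hc this)).symm
        subst hst
        have : j = jj s := congrArg Prod.snd hs
        exact hj (by rw [this]; simp)
      · have : c (t + 1) = c s := congrArg Prod.fst hs
        have hst : s = t + 1 := (hc this).symm
        subst hst
        have : j = jj (t + 1) := congrArg Prod.snd hs
        exact hj (by rw [this]; simp)
    have hjne : jj t ≠ jj (t + 1) := fun h => fin_succ_ne_self hm t (hjj h.symm)
    have := (Finset.sum_subset (Finset.subset_univ ({jj t, jj (t + 1)} : Finset (Fin n)))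
      (fun j hj hnj => hz j hj hnj)).symm
    rw [hsum] at this
    rw [Finset.sum_pair hjne] at this
    exact this.symm
  -- all diagonal values are equal
  have hval : ∀ t, g (c t, jj t) = g (c 0, jj 0) := by
    apply cyclic_induction (Q := fun t => g (c t, jj t) = g (c 0, jj 0))
    · intro t ht
      have h1 := hpcol t
      have h2 := hprow t
      linarith
    · rfl
  have hval2 : ∀ t, g (c (t + 1), jj t) = -g (c 0, jj 0) := by
    intro t
    have := hpcol t
    have := hval t
    linarith
  set a := g (c 0, jj 0) with hadef
  have ha : a ≠ 0 := by
    have : (c 0, jj 0) ∈ {p : Fin k × Fin n | cycVec c jj p ≠ 0} := by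
      show cycVec c jj (c 0, jj 0) ≠ 0
      rw [cycVec_minus hm hc hjj]
      norm_num
    rw [hsupp] at this
    exact this
  -- integrality: a = 1 or a = -1
  have haz : (gz (c 0, jj 0) : ℝ) = a := (hgz _).symm
  have hdvd : ∀ p, gz (c 0, jj 0) ∣ gz p := by
    intro p
    by_cases hp : g p = 0
    · have : (gz p : ℝ) = 0 := by rw [← hgz]; exact hp
      have : gz p = 0 := by exact_mod_cast this
      rw [this]
      exact dvd_zero _
    · have hp' : p ∈ {p : Fin k × Fin n | cycVec c jj p ≠ 0} := hsupp ▸ hp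
      rcases cycVec_support hc hjj hp' with ⟨s, hs⟩ | ⟨s, hs⟩
      · have : g p = -a := by rw [hs]; exact hval2 s
        have : (gz p : ℝ) = -(gz (c 0, jj 0) : ℝ) := by rw [← hgz, haz, this]
        have : gz p = -(gz (c 0, jj 0)) := by exact_mod_cast this
        rw [this]
        exact dvd_neg.mpr dvd_rfl
      · have : g p = a := by rw [hs]; exact hval s
        have : (gz p : ℝ) = (gz (c 0, jj 0) : ℝ) := by rw [← hgz, haz, this]
        have : gz p = gz (c 0, jj 0) := by exact_mod_cast this
        rw [this]
  have hazdvd : gz (c 0, jj 0) ∣ 1 := by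
    rw [← hgcd]
    exact Finset.dvd_gcd (fun p _ => hdvd p)
  have haz1 : gz (c 0, jj 0) = 1 ∨ gz (c 0, jj 0) = -1 :=
    Int.isUnit_iff.mp (isUnit_of_dvd_one hazdvd)
  -- two cases on the sign of a
  rcases haz1 with hE | hE
  · -- a = 1 : reversed cycle
    have haone : a = 1 := by rw [← haz, hE]; norm_num
    set c' : Fin m → Fin k := fun u => c (-u) with hc'def
    set jj' : Fin m → Fin n := fun u => jj (-u - 1) with hjj'def
    have hc' : Function.Injective c' := by
      intro u v huv
      have := hc huv
      have : -u = -v := this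
      exact neg_injective this
    have hjj' : Function.Injective jj' := by
      intro u v huv
      have h1 : -u - 1 = -v - 1 := hjj huv
      have : -u = -v := by linear_combination h1
      exact neg_injective this
    have hgeq : g = cycVec c' jj' := by
      funext p
      by_cases h1 : ∃ s, p = (c (s + 1), jj s)
      · obtain ⟨t, rfl⟩ := h1
        have e1 : c' (-t - 1) = c (t + 1) := by
          rw [hc'def]; congr 1; ring
        have e2 : jj' (-t - 1) = jj t := by
          rw [hjj'def]; congr 1; ring
        have := cycVec_minus hm hc' hjj' (-t - 1)
        rw [e1, e2] at this
        rw [this, hval2 t, haone]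
      · by_cases h2 : ∃ s, p = (c s, jj s)
        · obtain ⟨t, rfl⟩ := h2
          have e1 : c' ((-t - 1) + 1) = c t := by
            rw [hc'def]; congr 1; ring
          have e2 : jj' (-t - 1) = jj t := by
            rw [hjj'def]; congr 1; ring
          have := cycVec_plus hm hc' hjj' (-t - 1)
          rw [e1, e2] at this
          rw [this, hval t, haone]
        · -- p not in supp g
          have hpz : g p = 0 := by
            by_contra hg
            have : p ∈ {p : Fin k × Fin n | cycVec c jj p ≠ 0} := hsupp ▸ hg
            rcases cycVec_support hc hjj this with hf | hf
            · exact h1 hf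
            · exact h2 hf
          have hz' : cycVec c' jj' p = 0 := by
            apply cycVec_zero' hc' hjj'
            · rintro ⟨s, rfl⟩
              apply h2
              refine ⟨-s - 1, ?_⟩
              have e1 : c' (s + 1) = c (-s - 1) := by rw [hc'def]; congr 1; ring
              have e2 : jj' s = jj (-s - 1) := by rw [hjj'def]
              rw [e1, e2]
            · rintro ⟨s, rfl⟩
              apply h1
              refine ⟨-s - 1, ?_⟩
              have e1 : c' s = c ((-s - 1) + 1) := by rw [hc'def]; congr 1; ring
              have e2 : jj' s = jj (-s - 1) := by rw [hjj'def]
              rw [e1, e2]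
          rw [hpz, hz']
    refine ⟨m, hm, c', jj', hc', hjj', ?_⟩
    rw [sum_eq_cycVec hm c' jj']
    exact hgeq
  · -- a = -1 : the cycle itself
    have haone : a = -1 := by rw [← haz, hE]; norm_num
    have hgeq : g = cycVec c jj := by
      funext p
      by_cases h1 : ∃ s, p = (c (s + 1), jj s)
      · obtain ⟨t, rfl⟩ := h1
        rw [cycVec_plus hm hc hjj, hval2 t, haone]
        norm_num
      · by_cases h2 : ∃ s, p = (c s, jj s)
        · obtain ⟨t, rfl⟩ := h2
          rw [cycVec_minus hm hc hjj, hval t, haone]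
        · have hpz : g p = 0 := by
            by_contra hg
            have : p ∈ {p : Fin k × Fin n | cycVec c jj p ≠ 0} := hsupp ▸ hg
            rcases cycVec_support hc hjj this with hf | hf
            · exact h1 hf
            · exact h2 hf
          rw [hpz, cycVec_zero' hc hjj h1 h2]
    refine ⟨m, hm, c, jj, hc, hjj, ?_⟩
    rw [sum_eq_cycVec hm c jj]
    exact hgeq

end Main1

section Part2

variable {k n : ℕ} {κ : Fin k → ℕ}

lemma PP_nonneg {y : Fin k × Fin n → ℝ} (hy : y ∈ PPfixed (n := n) κ) (p) : 0 ≤ y p := hy.2.2 p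

lemma PP_le_one {y : Fin k × Fin n → ℝ} (hy : y ∈ PPfixed (n := n) κ) (i : Fin k) (j : Fin n) :
    y (i, j) ≤ 1 := by
  have h := hy.2.1 j
  have := Finset.single_le_sum (f := fun i' => y (i', j)) (fun i' _ => hy.2.2 (i', j))
    (Finset.mem_univ i)
  rw [h] at this
  exact this

lemma PP_total {y : Fin k × Fin n → ℝ} (hy : y ∈ PPfixed (n := n) κ) :
    ∑ p : Fin k × Fin n, y p = n := by
  rw [Fintype.sum_prod_type, Finset.sum_comm]
  have : ∀ j : Fin n, ∑ i, y (i, j) = 1 := hy.2.1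
  rw [Finset.sum_congr rfl (fun j _ => this j)]
  simp

lemma int_of_01_sum {α : Type*} {s : Finset α} {f : α → ℝ}
    (h : ∀ a ∈ s, f a = 0 ∨ f a = 1) : ∃ z : ℤ, (z : ℝ) = ∑ a ∈ s, f a := by
  classical
  refine Finset.sum_induction f (fun x => ∃ z : ℤ, (z : ℝ) = x) ?_ ⟨0, by norm_num⟩ ?_
  · rintro x y ⟨zx, hx⟩ ⟨zy, hy⟩
    exact ⟨zx + zy, by push_cast; rw [hx, hy]⟩
  · intro a ha
    rcases h a ha with h0 | h1
    · exact ⟨0, by rw [h0]; norm_num⟩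
    · exact ⟨1, by rw [h1]; norm_num⟩

/-- extreme points of the partition polytope are 0/1 vectors -/
lemma extreme_01 {y : Fin k × Fin n → ℝ} (hy : y ∈ (PPfixed (n := n) κ).extremePoints ℝ) :
    ∀ p, y p = 0 ∨ y p = 1 := by
  classical
  obtain ⟨hyP, hext⟩ := hy
  by_contra hcon
  push_neg at hcon
  obtain ⟨p1, hp1a, hp1b⟩ := hcon
  set S : Set (Fin k × Fin n) := {p | y p ≠ 0 ∧ y p ≠ 1} with hSdef
  have hp1 : p1 ∈ S := ⟨hp1a, hp1b⟩
  -- degree conditions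
  have hrowd : ∀ p ∈ S, ∃ j', j' ≠ p.2 ∧ (p.1, j') ∈ S := by
    rintro ⟨i, j⟩ ⟨h0, h1⟩
    by_contra hcon2
    push_neg at hcon2
    have hint : ∃ z : ℤ, (z : ℝ) = ∑ j' ∈ Finset.univ.erase j, y (i, j') := by
      apply int_of_01_sum
      intro j' hj'
      have hne : j' ≠ j := (Finset.mem_erase.mp hj').1
      have := hcon2 j' hne
      rw [hSdef] at this
      simp only [Set.mem_setOf_eq, not_and_or, not_not] at this
      rcases this with h | h
      · left; exact h
      · right; exact h
    obtain ⟨z, hz⟩ := hint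
    have hsum := hyP.1 i
    have herase := Finset.sum_erase_add Finset.univ (fun j' => y (i, j')) (Finset.mem_univ j)
    rw [hsum] at herase
    -- y (i, j) = κ i - z, an integer in [0, 1]
    have hyij : y (i, j) = (κ i : ℝ) - z := by
      rw [← hz] at herase; linarith
    have h0' : 0 ≤ y (i, j) := hyP.2.2 (i, j)
    have h1' : y (i, j) ≤ 1 := PP_le_one hyP i j
    have : ((κ i : ℤ) - z : ℤ) = (0 : ℤ) ∨ ((κ i : ℤ) - z : ℤ) = 1 := by
      have hc0 : (0 : ℝ) ≤ ((κ i : ℤ) - z : ℤ) := by push_cast; rw [← hyij] at *; push_cast at hyij ⊢; linarith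
      have hc1 : (((κ i : ℤ) - z : ℤ) : ℝ) ≤ 1 := by push_cast; linarith [hyij]
      have d0 : (0 : ℤ) ≤ (κ i : ℤ) - z := by exact_mod_cast hc0
      have d1 : (κ i : ℤ) - z ≤ 1 := by exact_mod_cast hc1
      omega
    rcases this with h | h
    · apply h0
      rw [hyij]
      have : ((κ i : ℤ) - z : ℝ) = 0 := by exact_mod_cast congrArg (fun x : ℤ => (x : ℝ)) h
      push_cast at this ⊢
      linarith
    · apply h1
      rw [hyij]
      have : ((κ i : ℤ) - z : ℝ) = 1 := by exact_mod_cast congrArg (fun x : ℤ => (x : ℝ)) h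
      push_cast at this ⊢
      linarith
  have hcold : ∀ p ∈ S, ∃ i', i' ≠ p.1 ∧ (i', p.2) ∈ S := by
    rintro ⟨i, j⟩ ⟨h0, h1⟩
    by_contra hcon2
    push_neg at hcon2
    have hint : ∃ z : ℤ, (z : ℝ) = ∑ i' ∈ Finset.univ.erase i, y (i', j) := by
      apply int_of_01_sum
      intro i' hi'
      have hne : i' ≠ i := (Finset.mem_erase.mp hi').1
      have := hcon2 i' hne
      rw [hSdef] at this
      simp only [Set.mem_setOf_eq, not_and_or, not_not] at this
      rcases this with h | h
      · left; exact h
      · right; exact h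
    obtain ⟨z, hz⟩ := hint
    have hsum := hyP.2.1 j
    have herase := Finset.sum_erase_add Finset.univ (fun i' => y (i', j)) (Finset.mem_univ i)
    rw [hsum] at herase
    have hyij : y (i, j) = 1 - z := by
      rw [← hz] at herase; linarith
    have h0' : 0 ≤ y (i, j) := hyP.2.2 (i, j)
    have h1' : y (i, j) ≤ 1 := PP_le_one hyP i j
    have hz' : z = 0 ∨ z = 1 := by
      have d0 : (0 : ℤ) ≤ z := by
        have : (0 : ℝ) ≤ z := by linarith [hyij]
        exact_mod_cast this
      have d1 : z ≤ 1 := by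
        have : (z : ℝ) ≤ 1 := by linarith [hyij]
        exact_mod_cast this
      omega
    rcases hz' with h | h
    · apply h1; rw [hyij, h]; norm_num
    · apply h0; rw [hyij, h]; norm_num
  obtain ⟨m, hm, c, jj, hc, hjj, hcell1, hcell2⟩ := exists_cycle S hrowd hcold hp1
  haveI : NeZero m := ⟨by omega⟩
  have hcell2' : ∀ t : Fin m, (c (t + 1), jj t) ∈ S := by
    intro t
    have := hcell2 t
    rwa [mk_succ_eq] at this
  set G := cycVec c jj with hGdef
  -- ε
  set ε : ℝ := Finset.univ.inf' (Finset.univ_nonempty (α := Fin m))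
    (fun t => min (y (c t, jj t)) (y (c (t + 1), jj t))) with hεdef
  have hεpos : 0 < ε := by
    rw [hεdef, Finset.lt_inf'_iff]
    intro t _
    have h1 : 0 < y (c t, jj t) := lt_of_le_of_ne (hyP.2.2 _) (Ne.symm (hcell1 t).1)
    have h2 : 0 < y (c (t + 1), jj t) := lt_of_le_of_ne (hyP.2.2 _) (Ne.symm (hcell2' t).1)
    exact lt_min h1 h2
  have hεle : ∀ p, G p ≠ 0 → ε ≤ y p := by
    intro p hp
    rcases cycVec_support hc hjj hp with ⟨s, hs⟩ | ⟨s, hs⟩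
    · subst hs
      calc ε ≤ min (y (c s, jj s)) (y (c (s + 1), jj s)) :=
            Finset.inf'_le _ (Finset.mem_univ s)
        _ ≤ _ := min_le_right _ _
    · subst hs
      calc ε ≤ min (y (c s, jj s)) (y (c (s + 1), jj s)) :=
            Finset.inf'_le _ (Finset.mem_univ s)
        _ ≤ _ := min_le_left _ _
  have hGbound : ∀ p, |G p| ≤ 1 := by
    intro p
    rw [hGdef, cycVec_apply hc hjj]
    by_cases h1 : ∃ t, p = (c (t + 1), jj t) <;> by_cases h2 : ∃ t, p = (c t, jj t) <;>
      simp [h1, h2]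
  -- the two perturbed points
  have hmemb : ∀ σ : ℝ, |σ| ≤ 1 → y + (σ * ε) • G ∈ PPfixed (n := n) κ := by
    intro σ hσ
    refine ⟨?_, ?_, ?_⟩
    · intro i
      have : ∑ j, (y + (σ * ε) • G) (i, j) = (∑ j, y (i, j)) + (σ * ε) * ∑ j, G (i, j) := by
        simp only [Pi.add_apply, Pi.smul_apply, smul_eq_mul]
        rw [Finset.sum_add_distrib, Finset.mul_sum]
      rw [this, hGdef, cycVec_rowsum, hyP.1 i]
      ring
    · intro j
      have : ∑ i, (y + (σ * ε) • G) (i, j) = (∑ i, y (i, j)) + (σ * ε) * ∑ i, G (i, j) := by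
        simp only [Pi.add_apply, Pi.smul_apply, smul_eq_mul]
        rw [Finset.sum_add_distrib, Finset.mul_sum]
      rw [this, hGdef, cycVec_colsum, hyP.2.1 j]
      ring
    · intro p
      simp only [Pi.add_apply, Pi.smul_apply, smul_eq_mul]
      by_cases hGp : G p = 0
      · rw [hGp]
        have := hyP.2.2 p
        linarith
      · have h1 := hεle p hGp
        have h2 := hGbound p
        have : |σ * ε * G p| ≤ ε := by
          rw [abs_mul, abs_mul, abs_of_pos hεpos]
          have h3 : |σ| * |G p| ≤ 1 := by nlinarith [abs_nonneg σ, abs_nonneg (G p)]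
          calc |σ| * ε * |G p| = (|σ| * |G p|) * ε := by ring
            _ ≤ 1 * ε := mul_le_mul_of_nonneg_right h3 (le_of_lt hεpos)
            _ = ε := one_mul ε
        have := neg_abs_le (σ * ε * G p)
        linarith
  have hx1 : y + (1 * ε) • G ∈ PPfixed (n := n) κ := hmemb 1 (by norm_num)
  have hx2 : y + ((-1) * ε) • G ∈ PPfixed (n := n) κ := hmemb (-1) (by norm_num)
  have hmid : y ∈ openSegment ℝ (y + ((-1) * ε) • G) (y + (1 * ε) • G) := by
    refine ⟨1/2, 1/2, by norm_num, by norm_num, by norm_num, ?_⟩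
    funext p
    simp only [Pi.add_apply, Pi.smul_apply, smul_eq_mul]
    ring
  have := hext hx2 hx1 hmid
  have hzero := congrFun this (c 0, jj 0)
  simp only [Pi.add_apply, Pi.smul_apply, smul_eq_mul] at hzero
  rw [hGdef, cycVec_minus hm hc hjj 0] at hzero
  have : ε = 0 := by linarith
  linarith

end Part2

section EdgeLemma

variable {k n : ℕ} {κ : Fin k → ℕ}

lemma all_one_of_sum {α : Type*} {s : Finset α} {f : α → ℝ}
    (hle : ∀ a ∈ s, f a ≤ 1) (hsum : ∑ a ∈ s, f a = s.card) : ∀ a ∈ s, f a = 1 := by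
  have h0 : ∀ a ∈ s, 0 ≤ 1 - f a := fun a ha => by linarith [hle a ha]
  have hz : ∑ a ∈ s, (1 - f a) = 0 := by
    rw [Finset.sum_sub_distrib, hsum]
    simp
  have := (Finset.sum_eq_zero_iff_of_nonneg h0).mp hz
  intro a ha
  linarith [this a ha]

lemma edge_lemma {y : Fin k × Fin n → ℝ}
    (hy : y ∈ PPfixed (n := n) κ) (h01 : ∀ p, y p = 0 ∨ y p = 1)
    {m : ℕ} [NeZero m] (hm : 2 ≤ m) {c : Fin m → Fin k} {jj : Fin m → Fin n}
    (hc : Function.Injective c) (hjj : Function.Injective jj)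
    (hone : ∀ t, y (c t, jj t) = 1) :
    IsExtreme ℝ (PPfixed (n := n) κ) (segment ℝ y (y + cycVec c jj)) := by
  classical
  set G := cycVec c jj with hGdef
  have hcne : ∀ t : Fin m, c t ≠ c (t + 1) := fun t h => fin_succ_ne_self hm t (hc h.symm)
  have hjne : ∀ t : Fin m, jj t ≠ jj (t + 1) := fun t h => fin_succ_ne_self hm t (hjj h.symm)
  -- columns of the cycle have a unique 1, at (c t, jj t)
  have hzero : ∀ t : Fin m, ∀ i, i ≠ c t → y (i, jj t) = 0 := by
    intro t i hi
    have hcolsum := hy.2.1 (jj t)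
    have hpair : y (c t, jj t) + y (i, jj t) ≤ 1 := by
      rw [← hcolsum]
      have hsub : ({c t, i} : Finset (Fin k)) ⊆ Finset.univ := Finset.subset_univ _
      have := Finset.sum_le_sum_of_subset_of_nonneg hsub
        (fun i' _ _ => hy.2.2 (i', jj t))
      rw [Finset.sum_pair (fun h => hi h.symm)] at this
      exact this
    have h0 := hy.2.2 (i, jj t)
    rw [hone t] at hpair
    linarith
  have hy0 : ∀ t : Fin m, y (c (t + 1), jj t) = 0 := fun t => hzero t _ (Ne.symm (hcne t))
  -- support rows of G
  have hGrow' : ∀ i j, G (i, j) ≠ 0 → ∃ t, i = c (t + 1) := by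
    intro i j hG
    rcases cycVec_support hc hjj hG with ⟨s, hs⟩ | ⟨s, hs⟩
    · exact ⟨s, congrArg Prod.fst hs⟩
    · refine ⟨s - 1, ?_⟩
      have : s - 1 + 1 = s := by ring
      rw [this]
      exact congrArg Prod.fst hs
  have hGrow : ∀ (t : Fin m) j, G (c (t + 1), j) ≠ 0 → j = jj t ∨ j = jj (t + 1) := by
    intro t j hG
    rcases cycVec_support hc hjj hG with ⟨s, hs⟩ | ⟨s, hs⟩
    · have : c (t + 1) = c (s + 1) := congrArg Prod.fst hs
      have hst : s = t := (add_left_injective 1 (hc this)).symm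
      subst hst
      exact Or.inl (congrArg Prod.snd hs)
    · have : c (t + 1) = c s := congrArg Prod.fst hs
      have hst : s = t + 1 := (hc this).symm
      subst hst
      exact Or.inr (congrArg Prod.snd hs)
  have hGcol : ∀ (t : Fin m) i, G (i, jj t) ≠ 0 → i = c t ∨ i = c (t + 1) := by
    intro t i hG
    rcases cycVec_support hc hjj hG with ⟨s, hs⟩ | ⟨s, hs⟩
    · have : jj t = jj s := congrArg Prod.snd hs
      have hst : s = t := hjj this.symm
      subst hst
      exact Or.inr (congrArg Prod.fst hs)
    · have : jj t = jj s := congrArg Prod.snd hs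
      have hst : s = t := hjj this.symm
      subst hst
      exact Or.inl (congrArg Prod.fst hs)
  -- segment representation
  have hseg_repr : ∀ x, x ∈ segment ℝ y (y + G) ↔ ∃ b : ℝ, 0 ≤ b ∧ b ≤ 1 ∧ x = y + b • G := by
    intro x
    constructor
    · rintro ⟨a, b, ha, hb, hab, hx⟩
      refine ⟨b, hb, by linarith, ?_⟩
      rw [← hx]
      funext p
      simp only [Pi.add_apply, Pi.smul_apply, smul_eq_mul]
      have : a = 1 - b := by linarith
      rw [this]
      ring
    · rintro ⟨b, hb0, hb1, hx⟩
      refine ⟨1 - b, b, by linarith, hb0, by ring, ?_⟩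
      rw [hx]
      funext p
      simp only [Pi.add_apply, Pi.smul_apply, smul_eq_mul]
      ring
  -- segment is inside the polytope
  have hseg_sub : segment ℝ y (y + G) ⊆ PPfixed (n := n) κ := by
    intro x hx
    obtain ⟨b, hb0, hb1, rfl⟩ := (hseg_repr x).mp hx
    refine ⟨?_, ?_, ?_⟩
    · intro i
      have : ∑ j, (y + b • G) (i, j) = (∑ j, y (i, j)) + b * ∑ j, G (i, j) := by
        simp only [Pi.add_apply, Pi.smul_apply, smul_eq_mul]
        rw [Finset.sum_add_distrib, Finset.mul_sum]
      rw [this, hGdef, cycVec_rowsum, hy.1 i]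
      ring
    · intro j
      have : ∑ i, (y + b • G) (i, j) = (∑ i, y (i, j)) + b * ∑ i, G (i, j) := by
        simp only [Pi.add_apply, Pi.smul_apply, smul_eq_mul]
        rw [Finset.sum_add_distrib, Finset.mul_sum]
      rw [this, hGdef, cycVec_colsum, hy.2.1 j]
      ring
    · intro p
      simp only [Pi.add_apply, Pi.smul_apply, smul_eq_mul]
      by_cases h1 : ∃ t, p = (c (t + 1), jj t)
      · obtain ⟨t, rfl⟩ := h1
        rw [hGdef, cycVec_plus hm hc hjj, hy0 t]
        linarith
      · by_cases h2 : ∃ t, p = (c t, jj t)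
        · obtain ⟨t, rfl⟩ := h2
          rw [hGdef, cycVec_minus hm hc hjj, hone t]
          linarith
        · rw [hGdef, cycVec_zero' hc hjj h1 h2]
          have := hy.2.2 p
          linarith
  -- the linear functional
  set Sf : Finset (Fin k × Fin n) :=
    Finset.univ.filter (fun p => y p = 1 ∨ G p ≠ 0) with hSfdef
  set f : (Fin k × Fin n → ℝ) → ℝ := fun x => ∑ p ∈ Sf, x p with hfdef
  have hf_le : ∀ x ∈ PPfixed (n := n) κ, f x ≤ n := by
    intro x hx
    have h1 : f x ≤ ∑ p : Fin k × Fin n, x p :=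
      Finset.sum_le_sum_of_subset_of_nonneg (Finset.filter_subset _ _)
        (fun p _ _ => hx.2.2 p)
    rw [PP_total hx] at h1
    exact h1
  have hf_off : ∀ x ∈ PPfixed (n := n) κ, f x = n → ∀ p ∉ Sf, x p = 0 := by
    intro x hx hfx
    have hsplit := Finset.sum_filter_add_sum_filter_not Finset.univ
      (fun p => y p = 1 ∨ G p ≠ 0) x
    rw [PP_total hx] at hsplit
    have hzero' : ∑ p ∈ Finset.univ.filter (fun p => ¬(y p = 1 ∨ G p ≠ 0)), x p = 0 := by
      have : f x = ∑ p ∈ Finset.univ.filter (fun p => y p = 1 ∨ G p ≠ 0), x p := rfl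
      rw [this] at hfx
      linarith
    intro p hp
    have hp' : p ∈ Finset.univ.filter (fun p => ¬(y p = 1 ∨ G p ≠ 0)) := by
      rw [Finset.mem_filter]
      refine ⟨Finset.mem_univ p, ?_⟩
      intro hcon
      exact hp (by rw [hSfdef, Finset.mem_filter]; exact ⟨Finset.mem_univ p, hcon⟩)
    exact (Finset.sum_eq_zero_iff_of_nonneg
      (fun q _ => hx.2.2 q)).mp hzero' p hp'
  have hf_seg : ∀ x ∈ segment ℝ y (y + G), f x = n := by
    intro x hx
    obtain ⟨b, hb0, hb1, rfl⟩ := (hseg_repr x).mp hx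
    have hoffzero : ∀ p ∉ Sf, (y + b • G) p = 0 := by
      intro p hp
      rw [hSfdef, Finset.mem_filter] at hp
      push_neg at hp
      have h := hp (Finset.mem_univ p)
      have hy1 : y p ≠ 1 := h.1
      have hG0 : G p = 0 := h.2
      have hyp0 : y p = 0 := (h01 p).resolve_right hy1
      simp only [Pi.add_apply, Pi.smul_apply, smul_eq_mul]
      rw [hyp0, hG0]
      ring
    have htot : ∑ p : Fin k × Fin n, (y + b • G) p = n :=
      PP_total (hseg_sub ((hseg_repr _).mpr ⟨b, hb0, hb1, rfl⟩))
    have hsplit := Finset.sum_filter_add_sum_filter_not Finset.univ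
      (fun p => y p = 1 ∨ G p ≠ 0) (y + b • G)
    rw [htot] at hsplit
    have : ∑ p ∈ Finset.univ.filter (fun p => ¬(y p = 1 ∨ G p ≠ 0)), (y + b • G) p = 0 := by
      apply Finset.sum_eq_zero
      intro p hp
      apply hoffzero
      rw [Finset.mem_filter] at hp
      intro hmem
      rw [hSfdef, Finset.mem_filter] at hmem
      exact hp.2 hmem.2
    rw [hfdef]
    have heq : Sf = Finset.univ.filter (fun p => y p = 1 ∨ G p ≠ 0) := rfl
    rw [heq]
    linarith
  -- the key step: a point of P supported in Sf lies on the segment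
  have hf_to_seg : ∀ x ∈ PPfixed (n := n) κ, (∀ p ∉ Sf, x p = 0) →
      x ∈ segment ℝ y (y + G) := by
    intro x hx hoff
    have hxle1 : ∀ p : Fin k × Fin n, x p ≤ 1 := fun p => PP_le_one hx p.1 p.2
    have hoff' : ∀ p : Fin k × Fin n, y p ≠ 1 → G p = 0 → x p = 0 := by
      intro p h1 h2
      apply hoff
      rw [hSfdef, Finset.mem_filter]
      push_neg
      intro _
      exact ⟨h1, h2⟩
    set v : Fin m → ℝ := fun t => x (c t, jj t) with hvdef
    -- Step A : column identities
    have hStepA : ∀ t : Fin m, v t + x (c (t + 1), jj t) = 1 := by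
      intro t
      have hcolsum := hx.2.1 (jj t)
      have hvan : ∀ i ∈ Finset.univ, i ∉ ({c t, c (t + 1)} : Finset (Fin k)) →
          x (i, jj t) = 0 := by
        intro i _ hi
        rw [Finset.mem_insert, Finset.mem_singleton] at hi
        push_neg at hi
        apply hoff'
        · rw [hzero t i hi.1]; norm_num
        · by_contra hG
          rcases hGcol t i hG with h | h
          · exact hi.1 h
          · exact hi.2 h
      have := (Finset.sum_subset (Finset.subset_univ ({c t, c (t + 1)} : Finset (Fin k)))
        (fun i hi hni => hvan i hi hni)).symm
      rw [hcolsum, Finset.sum_pair (hcne t)] at this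
      exact this.symm
    -- Step B : row inequalities
    set R : Fin m → Finset (Fin n) :=
      fun t => Finset.univ.filter (fun j => y (c (t + 1), j) = 1) with hRdef
    have hjj1R : ∀ t, jj (t + 1) ∈ R t := by
      intro t
      rw [hRdef, Finset.mem_filter]
      exact ⟨Finset.mem_univ _, hone (t + 1)⟩
    have hjjtR : ∀ t, jj t ∉ R t := by
      intro t h
      rw [hRdef, Finset.mem_filter] at h
      rw [hy0 t] at h
      norm_num at h
    have hRcard : ∀ t, ((R t).card : ℝ) = κ (c (t + 1)) := by
      intro t
      have hrsum := hy.1 (c (t + 1))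
      have hsplit := Finset.sum_filter_add_sum_filter_not Finset.univ
        (fun j => y (c (t + 1), j) = 1) (fun j => y (c (t + 1), j))
      rw [hrsum] at hsplit
      have h1 : ∑ j ∈ Finset.univ.filter (fun j => y (c (t + 1), j) = 1),
          y (c (t + 1), j) = (R t).card := by
        rw [Finset.sum_congr rfl (fun j hj => (Finset.mem_filter.mp hj).2), hRdef]
        simp
      have h2 : ∑ j ∈ Finset.univ.filter (fun j => ¬(y (c (t + 1), j) = 1)),
          y (c (t + 1), j) = 0 := by
        apply Finset.sum_eq_zero
        intro j hj
        exact (h01 (c (t + 1), j)).resolve_right (Finset.mem_filter.mp hj).2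
      rw [h1, h2] at hsplit
      linarith
    have hxrow : ∀ t : Fin m, (∑ j ∈ R t, x (c (t + 1), j)) + x (c (t + 1), jj t)
        = κ (c (t + 1)) := by
      intro t
      have hrsum := hx.1 (c (t + 1))
      have hvan : ∀ j ∈ Finset.univ, j ∉ insert (jj t) (R t) → x (c (t + 1), j) = 0 := by
        intro j _ hj
        rw [Finset.mem_insert] at hj
        push_neg at hj
        apply hoff'
        · intro h1
          exact hj.2 (by rw [hRdef, Finset.mem_filter]; exact ⟨Finset.mem_univ _, h1⟩)
        · by_contra hG
          rcases hGrow t j hG with h | h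
          · exact hj.1 h
          · exact hj.2 (h ▸ hjj1R t)
      have := (Finset.sum_subset (Finset.subset_univ (insert (jj t) (R t)))
        (fun j hj hnj => hvan j hj hnj)).symm
      rw [hrsum, Finset.sum_insert (hjjtR t)] at this
      linarith [this]
    -- v is (cyclically) monotone, hence constant
    have hRsum : ∀ t : Fin m, ∑ j ∈ R t, x (c (t + 1), j) = κ (c (t + 1)) - 1 + v t := by
      intro t
      have h1 := hxrow t
      have h2 := hStepA t
      linarith
    have hRsplit : ∀ t : Fin m, ∑ j ∈ R t, x (c (t + 1), j)
        = v (t + 1) + ∑ j ∈ (R t).erase (jj (t + 1)), x (c (t + 1), j) := by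
      intro t
      rw [← Finset.add_sum_erase (R t) _ (hjj1R t)]
    have hRcard' : ∀ t, (((R t).erase (jj (t + 1))).card : ℝ) = κ (c (t + 1)) - 1 := by
      intro t
      rw [Finset.card_erase_of_mem (hjj1R t)]
      have h1 := hRcard t
      have h2 : 1 ≤ (R t).card := Finset.card_pos.mpr ⟨jj (t + 1), hjj1R t⟩
      push_cast [Nat.cast_sub h2]
      push_cast at h1
      linarith
    have hmono : ∀ t : Fin m, v t ≤ v (t + 1) := by
      intro t
      have hbound : ∑ j ∈ (R t).erase (jj (t + 1)), x (c (t + 1), j)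
          ≤ (((R t).erase (jj (t + 1))).card : ℝ) := by
        have := Finset.sum_le_card_nsmul ((R t).erase (jj (t + 1)))
          (fun j => x (c (t + 1), j)) 1 (fun j _ => hxle1 _)
        simpa using this
      have h1 := hRsum t
      have h2 := hRsplit t
      have h3 := hRcard' t
      linarith
    have hconst : ∀ t, v t = v 0 := by
      have hsum_eq : ∑ t : Fin m, v (t + 1) = ∑ t : Fin m, v t :=
        Fintype.sum_equiv (Equiv.addRight 1) _ _ (fun t => rfl)
      have hdiff : ∀ t ∈ Finset.univ, v (t + 1) - v t = 0 := by
        apply (Finset.sum_eq_zero_iff_of_nonneg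
          (fun t _ => by linarith [hmono t])).mp
        rw [Finset.sum_sub_distrib, hsum_eq]
        ring
      apply cyclic_induction (Q := fun t => v t = v 0)
      · intro t ht
        have := hdiff t (Finset.mem_univ t)
        linarith
      · rfl
    -- off-diagonal fixed cells are 1
    have hfixed : ∀ t : Fin m, ∀ j ∈ (R t).erase (jj (t + 1)), x (c (t + 1), j) = 1 := by
      intro t
      apply all_one_of_sum (fun j _ => hxle1 _)
      have h1 := hRsum t
      have h2 := hRsplit t
      have h3 := hRcard' t
      have h4 : v (t + 1) = v t := by rw [hconst (t + 1), hconst t]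
      linarith
    -- rows not of the form c (t+1) agree with y
    have hoffrow : ∀ i : Fin k, (∀ t : Fin m, i ≠ c (t + 1)) → ∀ j, x (i, j) = y (i, j) := by
      intro i hi
      have hGz : ∀ j, G (i, j) = 0 := by
        intro j
        by_contra hG
        obtain ⟨t, ht⟩ := hGrow' i j hG
        exact hi t ht
      set Ri : Finset (Fin n) := Finset.univ.filter (fun j => y (i, j) = 1) with hRidef
      have hRicard : ((Ri).card : ℝ) = κ i := by
        have hrsum := hy.1 i
        have hsplit := Finset.sum_filter_add_sum_filter_not Finset.univ
          (fun j => y (i, j) = 1) (fun j => y (i, j))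
        rw [hrsum] at hsplit
        have h1 : ∑ j ∈ Finset.univ.filter (fun j => y (i, j) = 1), y (i, j)
            = (Ri).card := by
          rw [Finset.sum_congr rfl (fun j hj => (Finset.mem_filter.mp hj).2), hRidef]
          simp
        have h2 : ∑ j ∈ Finset.univ.filter (fun j => ¬(y (i, j) = 1)), y (i, j) = 0 := by
          apply Finset.sum_eq_zero
          intro j hj
          exact (h01 (i, j)).resolve_right (Finset.mem_filter.mp hj).2
        rw [h1, h2] at hsplit
        linarith
      have hxvan : ∀ j ∈ Finset.univ, j ∉ Ri → x (i, j) = 0 := by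
        intro j _ hj
        apply hoff'
        · intro h1
          exact hj (by rw [hRidef, Finset.mem_filter]; exact ⟨Finset.mem_univ _, h1⟩)
        · exact hGz j
      have hxRi : ∑ j ∈ Ri, x (i, j) = κ i := by
        have hrsum := hx.1 i
        have := (Finset.sum_subset (Finset.subset_univ Ri)
          (fun j hj hnj => hxvan j hj hnj)).symm
        rw [hrsum] at this
        exact this.symm
      have hall1 : ∀ j ∈ Ri, x (i, j) = 1 := by
        apply all_one_of_sum (fun j _ => hxle1 _)
        rw [hxRi, hRicard]
      intro j
      by_cases hj : j ∈ Ri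
      · rw [hall1 j hj, (Finset.mem_filter.mp hj).2]
      · rw [hxvan j (Finset.mem_univ j) hj]
        have h1 : y (i, j) ≠ 1 := fun h =>
          hj (by rw [hRidef, Finset.mem_filter]; exact ⟨Finset.mem_univ _, h⟩)
        rw [(h01 (i, j)).resolve_right h1]
    -- assemble x = y + (1 - v 0) • G
    have hfinal : x = y + (1 - v 0) • G := by
      funext p
      simp only [Pi.add_apply, Pi.smul_apply, smul_eq_mul]
      by_cases h2 : ∃ t, p = (c t, jj t)
      · obtain ⟨t, rfl⟩ := h2
        rw [hGdef, cycVec_minus hm hc hjj, hone t]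
        have : x (c t, jj t) = v 0 := by rw [← hconst t]
        rw [this]
        ring
      · by_cases h1 : ∃ t, p = (c (t + 1), jj t)
        · obtain ⟨t, rfl⟩ := h1
          rw [hGdef, cycVec_plus hm hc hjj, hy0 t]
          have hA := hStepA t
          have := hconst t
          have : x (c (t + 1), jj t) = 1 - v 0 := by
            rw [← hconst t]
            linarith [hStepA t]
          rw [this]
          ring
        · have hGz : G p = 0 := cycVec_zero' hc hjj h1 h2
          rw [hGz]
          obtain ⟨i, j⟩ := p
          by_cases hi : ∃ t : Fin m, i = c (t + 1)
          · obtain ⟨t, rfl⟩ := hi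
            by_cases hyp1 : y (c (t + 1), j) = 1
            · have hjR : j ∈ R t := by
                rw [hRdef, Finset.mem_filter]
                exact ⟨Finset.mem_univ _, hyp1⟩
              have hjne' : j ≠ jj (t + 1) := by
                intro h
                exact h2 ⟨t + 1, by rw [h]⟩
              have : x (c (t + 1), j) = 1 :=
                hfixed t j (Finset.mem_erase.mpr ⟨hjne', hjR⟩)
              rw [this, hyp1]
              ring
            · rw [hoff' _ hyp1 hGz, (h01 (c (t + 1), j)).resolve_right hyp1]
              ring
          · push_neg at hi
            rw [hoffrow i hi j]
            ring
    rw [hseg_repr]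
    refine ⟨1 - v 0, ?_, ?_, hfinal⟩
    · have : v 0 ≤ 1 := hxle1 (c 0, jj 0)
      linarith
    · have : 0 ≤ v 0 := hx.2.2 (c 0, jj 0)
      linarith
  -- IsExtreme
  constructor
  · exact hseg_sub
  · intro x1 hx1 x2 hx2 x hxseg hxopen
    obtain ⟨a, b, ha, hb, hab, hxe⟩ := hxopen
    have hfx : f x = n := hf_seg x hxseg
    have hfx1 : f x1 ≤ n := hf_le x1 hx1
    have hfx2 : f x2 ≤ n := hf_le x2 hx2
    have hlin : f x = a * f x1 + b * f x2 := by
      rw [← hxe, hfdef]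
      simp only [Pi.add_apply, Pi.smul_apply, smul_eq_mul]
      rw [Finset.sum_add_distrib, Finset.mul_sum, Finset.mul_sum]
    have hfx1' : f x1 = n := by nlinarith
    have hfx2' : f x2 = n := by nlinarith
    exact hf_to_seg x1 hx1 (hf_off x1 hx1 hfx1')

end EdgeLemma

section StepLemma

variable {k n : ℕ} {κ : Fin k → ℕ}

lemma col_unique {y : Fin k × Fin n → ℝ} (hy : y ∈ PPfixed (n := n) κ)
    {i0 : Fin k} {j : Fin n} (h1 : y (i0, j) = 1) :
    ∀ i, i ≠ i0 → y (i, j) = 0 := by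
  intro i hi
  have hcolsum := hy.2.1 j
  have hpair : y (i0, j) + y (i, j) ≤ 1 := by
    rw [← hcolsum]
    have hsub : ({i0, i} : Finset (Fin k)) ⊆ Finset.univ := Finset.subset_univ _
    have := Finset.sum_le_sum_of_subset_of_nonneg hsub (fun i' _ _ => hy.2.2 (i', j))
    rw [Finset.sum_pair (fun h => hi h.symm)] at this
    exact this
  have h0 := hy.2.2 (i, j)
  rw [h1] at hpair
  linarith

lemma step_lemma {y : Fin k × Fin n → ℝ} (hy : y ∈ PPfixed (n := n) κ)
    (h01 : ∀ p, y p = 0 ∨ y p = 1)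
    {m : ℕ} [NeZero m] (hm : 2 ≤ m) {c : Fin m → Fin k} {jj : Fin m → Fin n}
    (hc : Function.Injective c) (hjj : Function.Injective jj)
    {α : ℝ} (hα : 0 < α)
    (hnext : y + α • cycVec c jj ∈ PPfixed (n := n) κ)
    (hmax : ∀ β : ℝ, α < β → y + β • cycVec c jj ∉ PPfixed (n := n) κ) :
    α = 1 ∧ (∀ t, y (c t, jj t) = 1) := by
  set G := cycVec c jj with hGdef
  have hone : ∀ t, y (c t, jj t) = 1 := by
    intro t
    have h := hnext.2.2 (c t, jj t)
    simp only [Pi.add_apply, Pi.smul_apply, smul_eq_mul] at h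
    rw [hGdef, cycVec_minus hm hc hjj] at h
    have : α ≤ y (c t, jj t) := by linarith
    rcases h01 (c t, jj t) with h0 | h1
    · rw [h0] at this; linarith
    · exact h1
  refine ⟨?_, hone⟩
  have hαle : α ≤ 1 := by
    have h := hnext.2.2 (c 0, jj 0)
    simp only [Pi.add_apply, Pi.smul_apply, smul_eq_mul] at h
    rw [hGdef, cycVec_minus hm hc hjj, hone 0] at h
    linarith
  by_contra hne
  have hlt : α < 1 := lt_of_le_of_ne hαle hne
  apply hmax 1 hlt
  refine ⟨?_, ?_, ?_⟩
  · intro i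
    have : ∑ j, (y + (1:ℝ) • G) (i, j) = (∑ j, y (i, j)) + 1 * ∑ j, G (i, j) := by
      simp only [Pi.add_apply, Pi.smul_apply, smul_eq_mul]
      rw [Finset.sum_add_distrib, Finset.mul_sum]
    rw [this, hGdef, cycVec_rowsum, hy.1 i]
    ring
  · intro j
    have : ∑ i, (y + (1:ℝ) • G) (i, j) = (∑ i, y (i, j)) + 1 * ∑ i, G (i, j) := by
      simp only [Pi.add_apply, Pi.smul_apply, smul_eq_mul]
      rw [Finset.sum_add_distrib, Finset.mul_sum]
    rw [this, hGdef, cycVec_colsum, hy.2.1 j]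
    ring
  · intro p
    simp only [Pi.add_apply, Pi.smul_apply, smul_eq_mul]
    by_cases h2 : ∃ t, p = (c t, jj t)
    · obtain ⟨t, rfl⟩ := h2
      rw [hGdef, cycVec_minus hm hc hjj, hone t]
      norm_num
    · by_cases h1 : ∃ t, p = (c (t + 1), jj t)
      · obtain ⟨t, rfl⟩ := h1
        rw [hGdef, cycVec_plus hm hc hjj]
        have := hy.2.2 (c (t + 1), jj t)
        linarith
      · rw [hGdef, cycVec_zero' hc hjj h1 h2]
        have := hy.2.2 p
        linarith

lemma step_next01 {y : Fin k × Fin n → ℝ} (hy : y ∈ PPfixed (n := n) κ)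
    (h01 : ∀ p, y p = 0 ∨ y p = 1)
    {m : ℕ} [NeZero m] (hm : 2 ≤ m) {c : Fin m → Fin k} {jj : Fin m → Fin n}
    (hc : Function.Injective c) (hjj : Function.Injective jj)
    (hone : ∀ t, y (c t, jj t) = 1) :
    ∀ p, (y + (1:ℝ) • cycVec c jj) p = 0 ∨ (y + (1:ℝ) • cycVec c jj) p = 1 := by
  intro p
  simp only [Pi.add_apply, Pi.smul_apply, smul_eq_mul]
  by_cases h2 : ∃ t, p = (c t, jj t)
  · obtain ⟨t, rfl⟩ := h2
    rw [cycVec_minus hm hc hjj, hone t]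
    left; ring
  · by_cases h1 : ∃ t, p = (c (t + 1), jj t)
    · obtain ⟨t, rfl⟩ := h1
      rw [cycVec_plus hm hc hjj]
      have hz : y (c (t + 1), jj t) = 0 :=
        col_unique hy (hone t) _ (fun h => fin_succ_ne_self hm t (hc h))
      rw [hz]
      right; ring
    · rw [cycVec_zero' hc hjj h1 h2]
      have := h01 p
      rcases this with h | h
      · left; rw [h]; ring
      · right; rw [h]; ring

end StepLemma

theorem fixed_size_partition_polytope_circuits_and_edge_walks
    {k n : ℕ} (hk : 0 < k) (hn : 0 < n) (κ : Fin k → ℕ)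
    (hκpos : ∀ i, 0 < κ i) (hκsum : ∑ i, κ i = n) :
    (∀ g : Fin k × Fin n → ℝ, IsCircuitPPfixed g ↔ IsCyclicalExchange g) ∧
    (∀ (k' : ℕ) (y : Fin (k' + 1) → Fin k × Fin n → ℝ),
      IsCircuitWalk (PPfixed (n := n) κ) IsCircuitPPfixed y →
        IsEdgeWalk (PPfixed (n := n) κ) y) := by
  constructor
  · intro g
    exact ⟨cyc_of_circuit, circuit_of_cyc⟩
  · intro k' y hwalk
    obtain ⟨h0, hlast, hsteps⟩ := hwalk
    have hallP : ∀ i : Fin (k' + 1), y i ∈ PPfixed (n := n) κ := by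
      intro i
      induction i using Fin.lastCases with
      | last => exact hlast.1
      | cast j => exact (hsteps j).1
    -- key per-step lemma
    have hkey : ∀ i : Fin k', (∀ p, y i.castSucc p = 0 ∨ y i.castSucc p = 1) →
        (∀ p, y i.succ p = 0 ∨ y i.succ p = 1) ∧ y i.castSucc ≠ y i.succ ∧
        IsExtreme ℝ (PPfixed (n := n) κ) (segment ℝ (y i.castSucc) (y i.succ)) := by
      intro i h01
      obtain ⟨hP, g, α, hcirc, hα, hstep, hmax⟩ := hsteps i
      obtain ⟨m, hm, c, jj, hc, hjj, hgsum⟩ := cyc_of_circuit hcirc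
      haveI : NeZero m := ⟨by omega⟩
      rw [sum_eq_cycVec hm c jj] at hgsum
      subst hgsum
      have hnext : y i.castSucc + α • cycVec c jj ∈ PPfixed (n := n) κ := by
        rw [← hstep]
        exact hallP i.succ
      obtain ⟨hα1, hone⟩ := step_lemma hP h01 hm hc hjj hα hnext hmax
      subst hα1
      have hsucc_eq : y i.succ = y i.castSucc + (1:ℝ) • cycVec c jj := hstep
      refine ⟨?_, ?_, ?_⟩
      · rw [hsucc_eq]
        exact step_next01 hP h01 hm hc hjj hone
      · rw [hsucc_eq]
        intro hcon
        have := congrFun hcon (c 0, jj 0)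
        simp only [Pi.add_apply, Pi.smul_apply, smul_eq_mul] at this
        rw [cycVec_minus hm hc hjj] at this
        linarith
      · rw [hsucc_eq, one_smul]
        exact edge_lemma hP h01 hm hc hjj hone
    have h01 : ∀ i : Fin (k' + 1), ∀ p, y i p = 0 ∨ y i p = 1 := by
      intro i
      induction i using Fin.induction with
      | zero => exact extreme_01 h0
      | succ j ih => exact (hkey j ih).1
    intro i
    exact ⟨(hkey i (h01 i.castSucc)).2.1, (hkey i (h01 i.castSucc)).2.2⟩
end

section
/- Consider the transportation polytope P with m = 3 suppliers and n = 3 customers and supply and demand vectors u = v = (1, 2, 2)ᵀ. Then the point x = (x₁₁, x₁₂, x₁₃, x₂₁, x₂₂, x₂₃, x₃₁, x₃₂, x₃₃)ᵀ = (0,1,0,1,0,1,0,1,1)ᵀ is a vertex of P, the vector g = (1,−1,0,−1,1,0,0,0,0)ᵀ is a circuit of P, the maximal step size from x along g is α = 1, and x + g ∈ P is not a vertex of P. In particular, there exists a transportation polytope in which every circuit walk is integral but not every circuit walk is a vertex walk. -/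
/-!
STATEMENT 18: In the 3×3 transportation polytope with u = v = (1,2,2)ᵀ, the point
x = (0,1,0,1,0,1,0,1,1)ᵀ is a vertex, g = (1,-1,0,-1,1,0,0,0,0)ᵀ is a circuit, the maximal
step size from x along g is α = 1, and x + g ∈ P is not a vertex.  In particular, there is a
transportation polytope in which every circuit walk is integral but not every circuit walk is
a vertex walk.
-/

/-- The transportation polytope with supplies `u` and demands `v`. -/
def TransportationPolytope {m n : ℕ} (u : Fin m → ℕ) (v : Fin n → ℕ) :
    Set (Fin m × Fin n → ℝ) :=
  {y | (∀ i, ∑ j, y (i, j) = (u i : ℝ)) ∧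
       (∀ j, ∑ i, y (i, j) = (v j : ℝ)) ∧
       ∀ p, 0 ≤ y p}

/-- `g` is a circuit of the constraint system defining the transportation polytope: a nonzero
kernel element of the equality constraints with coprime integer components such that `B g` is
support-minimal, where `B` collects the nonnegativity constraints. -/
def IsCircuitTP {m n : ℕ} (g : Fin m × Fin n → ℝ) : Prop :=
  (∀ i, ∑ j, g (i, j) = 0) ∧ (∀ j, ∑ i, g (i, j) = 0) ∧ g ≠ 0 ∧
  (∃ gz : Fin m × Fin n → ℤ, (∀ p, g p = (gz p : ℝ)) ∧ Finset.univ.gcd gz = 1) ∧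
  ¬ ∃ y : Fin m × Fin n → ℝ,
      (∀ i, ∑ j, y (i, j) = 0) ∧ (∀ j, ∑ i, y (i, j) = 0) ∧ y ≠ 0 ∧
      {p | -(y p) ≠ 0} ⊂ {p | -(g p) ≠ 0}

/-- A circuit walk is integral if all of its points have integer components. -/
def IsIntegralWalk {ι : Type*} {k : ℕ} (y : Fin (k + 1) → ι → ℝ) : Prop :=
  ∀ i p, ∃ z : ℤ, y i p = (z : ℝ)

/-- A circuit walk is a vertex walk if all of its points are vertices of `P`. -/
def IsVertexWalk {ι : Type*} (P : Set (ι → ℝ)) {k : ℕ} (y : Fin (k + 1) → ι → ℝ) : Prop :=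
  ∀ i, y i ∈ P.extremePoints ℝ


section Aux18

attribute [local simp] Matrix.cons_val_two

def KeyBody18 (S : Fin 3 × Fin 3 → Bool) : Prop :=
    (∃ p, S p = true) →
        (∀ (p : Fin 3 × Fin 3), S p = true → ∃ q, S q = true ∧ q.1 = p.1 ∧ q.2 ≠ p.2) →
          (∀ (p : Fin 3 × Fin 3), S p = true → ∃ q, S q = true ∧ q.2 = p.2 ∧ q.1 ≠ p.1) →
            ∃ σ τ : Fin 3 → Fin 3,
              Function.Bijective σ ∧
                Function.Bijective τ ∧ σ ≠ τ ∧ ∀ (i : Fin 3), σ i ≠ τ i →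
                  S (i, σ i) = true ∧ S (i, τ i) = true

set_option synthInstance.maxSize 1000 in
set_option synthInstance.maxHeartbeats 400000 in
noncomputable instance keyInst18 : DecidablePred KeyBody18 := fun S => by
  unfold KeyBody18; infer_instance

set_option maxHeartbeats 16000000 in
set_option maxRecDepth 100000 in
lemma key18 : ∀ S, KeyBody18 S := by decide

lemma key (S : Fin 3 × Fin 3 → Bool) (h1 : ∃ p, S p = true)
    (h2 : ∀ (p : Fin 3 × Fin 3), S p = true → ∃ q, S q = true ∧ q.1 = p.1 ∧ q.2 ≠ p.2)
    (h3 : ∀ (p : Fin 3 × Fin 3), S p = true → ∃ q, S q = true ∧ q.2 = p.2 ∧ q.1 ≠ p.1) :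
    ∃ σ τ : Fin 3 → Fin 3,
      Function.Bijective σ ∧
        Function.Bijective τ ∧ σ ≠ τ ∧ ∀ (i : Fin 3), σ i ≠ τ i →
          S (i, σ i) = true ∧ S (i, τ i) = true := key18 S h1 h2 h3

/-- cycle vector from two permutations -/
def cycW (σ τ : Fin 3 → Fin 3) : Fin 3 × Fin 3 → ℝ := fun p =>
  (if p.2 = σ p.1 then 1 else 0) - (if p.2 = τ p.1 then 1 else 0)

lemma cycW_row (σ τ : Fin 3 → Fin 3) (i : Fin 3) : ∑ j, cycW σ τ (i, j) = 0 := by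
  simp only [cycW]
  rw [Finset.sum_sub_distrib]
  simp [Finset.sum_ite_eq']

lemma cycW_col (σ τ : Fin 3 → Fin 3) (hσ : Function.Bijective σ) (hτ : Function.Bijective τ)
    (j : Fin 3) : ∑ i, cycW σ τ (i, j) = 0 := by
  simp only [cycW]
  rw [Finset.sum_sub_distrib]
  have h1 : ∑ i, (if j = σ i then (1:ℝ) else 0) = ∑ c, (if j = c then (1:ℝ) else 0) :=
    Fintype.sum_bijective σ hσ _ _ (fun _ => rfl)
  have h2 : ∑ i, (if j = τ i then (1:ℝ) else 0) = ∑ c, (if j = c then (1:ℝ) else 0) :=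
    Fintype.sum_bijective τ hτ _ _ (fun _ => rfl)
  rw [h1, h2, sub_self]

lemma cycW_vals (σ τ : Fin 3 → Fin 3) (p : Fin 3 × Fin 3) :
    cycW σ τ p = 0 ∨ cycW σ τ p = 1 ∨ cycW σ τ p = -1 := by
  unfold cycW
  by_cases h1 : p.2 = σ p.1 <;> by_cases h2 : p.2 = τ p.1
  · rw [if_pos h1, if_pos h2]; left; norm_num
  · rw [if_pos h1, if_neg h2]; right; left; norm_num
  · rw [if_neg h1, if_pos h2]; right; right; norm_num
  · rw [if_neg h1, if_neg h2]; left; norm_num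

lemma cycW_supp (σ τ : Fin 3 → Fin 3) (p : Fin 3 × Fin 3) (h : cycW σ τ p ≠ 0) :
    σ p.1 ≠ τ p.1 ∧ (p.2 = σ p.1 ∨ p.2 = τ p.1) := by
  unfold cycW at h
  constructor
  · intro he; rw [he] at h; simp at h
  · by_contra hc
    push_neg at hc
    rw [if_neg hc.1, if_neg hc.2, sub_self] at h
    exact h rfl

lemma cycW_one (σ τ : Fin 3 → Fin 3) (i : Fin 3) (h : σ i ≠ τ i) :
    cycW σ τ (i, σ i) = 1 := by
  unfold cycW
  simp [h]


lemma fin3_cases (j : Fin 3) : j = 0 ∨ j = 1 ∨ j = 2 := by revert j; decide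

/-- a kernel vector has no row with exactly one nonzero entry -/
lemma row_mate (g : Fin 3 × Fin 3 → ℝ) (hr : ∀ i, ∑ j, g (i, j) = 0)
    (p : Fin 3 × Fin 3) (hp : g p ≠ 0) : ∃ q, g q ≠ 0 ∧ q.1 = p.1 ∧ q.2 ≠ p.2 := by
  obtain ⟨i, j⟩ := p
  by_contra hc
  push_neg at hc
  have hz : ∀ j' : Fin 3, j' ≠ j → g (i, j') = 0 := by
    intro j' hj'
    by_contra hgj'
    exact hj' (hc (i, j') hgj' rfl)
  have hs := hr i
  rw [Fin.sum_univ_three] at hs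
  rcases fin3_cases j with h | h | h <;> subst h
  · rw [hz 1 (by decide), hz 2 (by decide)] at hs; exact hp (by linarith)
  · rw [hz 0 (by decide), hz 2 (by decide)] at hs; exact hp (by linarith)
  · rw [hz 0 (by decide), hz 1 (by decide)] at hs; exact hp (by linarith)

lemma col_mate (g : Fin 3 × Fin 3 → ℝ) (hc' : ∀ j, ∑ i, g (i, j) = 0)
    (p : Fin 3 × Fin 3) (hp : g p ≠ 0) : ∃ q, g q ≠ 0 ∧ q.2 = p.2 ∧ q.1 ≠ p.1 := by
  obtain ⟨i, j⟩ := p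
  by_contra hcon
  push_neg at hcon
  have hz : ∀ i' : Fin 3, i' ≠ i → g (i', j) = 0 := by
    intro i' hi'
    by_contra hgi'
    exact hi' (hcon (i', j) hgi' rfl)
  have hs := hc' j
  rw [Fin.sum_univ_three] at hs
  rcases fin3_cases i with h | h | h <;> subst h
  · rw [hz 1 (by decide), hz 2 (by decide)] at hs; exact hp (by linarith)
  · rw [hz 0 (by decide), hz 2 (by decide)] at hs; exact hp (by linarith)
  · rw [hz 0 (by decide), hz 1 (by decide)] at hs; exact hp (by linarith)

lemma circuit_entries (g : Fin 3 × Fin 3 → ℝ) (h : IsCircuitTP g) :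
    ∀ p, g p = 0 ∨ g p = 1 ∨ g p = -1 := by
  classical
  obtain ⟨hr, hc, hg0, ⟨gz, hgz, hgcd⟩, hmin⟩ := h
  set S : Fin 3 × Fin 3 → Bool := fun p => decide (g p ≠ 0) with hS
  have hSiff : ∀ p, S p = true ↔ g p ≠ 0 := by intro p; simp [hS]
  obtain ⟨σ, τ, hσ, hτ, hστ, hmem⟩ := key S
    (by obtain ⟨p, hp⟩ := Function.ne_iff.mp hg0; exact ⟨p, (hSiff p).mpr hp⟩)
    (by intro p hp
        obtain ⟨q, h1, h2, h3⟩ := row_mate g hr p ((hSiff p).mp hp)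
        exact ⟨q, (hSiff q).mpr h1, h2, h3⟩)
    (by intro p hp
        obtain ⟨q, h1, h2, h3⟩ := col_mate g hc p ((hSiff p).mp hp)
        exact ⟨q, (hSiff q).mpr h1, h2, h3⟩)
  set w := cycW σ τ with hw
  have hsupp : ∀ p, w p ≠ 0 → g p ≠ 0 := by
    intro p hp
    obtain ⟨hne, hor⟩ := cycW_supp σ τ p hp
    obtain ⟨hm1, hm2⟩ := hmem p.1 hne
    rcases hor with h' | h'
    · have he : (p.1, σ p.1) = p := by rw [← h']
      rw [← he]; exact (hSiff _).mp hm1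
    · have he : (p.1, τ p.1) = p := by rw [← h']
      rw [← he]; exact (hSiff _).mp hm2
  obtain ⟨i₀, hi₀⟩ := Function.ne_iff.mp hστ
  set p₀ : Fin 3 × Fin 3 := (i₀, σ i₀) with hp₀
  have hwp₀ : w p₀ = 1 := cycW_one σ τ i₀ hi₀
  set c := g p₀ with hcdef
  have hcne : c ≠ 0 := hsupp p₀ (by rw [hwp₀]; norm_num)
  have hgcw : ∀ p, g p = c * w p := by
    by_contra hcon
    push_neg at hcon
    obtain ⟨p₁, hp₁⟩ := hcon
    apply hmin
    refine ⟨fun p => g p - c * w p, ?_, ?_, ?_, ?_⟩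
    · intro i
      have h1 := cycW_row σ τ i
      rw [← hw] at h1
      have h2 := hr i
      calc ∑ j, (g (i,j) - c * w (i,j)) = (∑ j, g (i,j)) - c * ∑ j, w (i,j) := by
            rw [Finset.sum_sub_distrib, Finset.mul_sum]
        _ = 0 := by rw [h1, h2]; ring
    · intro j
      have h1 := cycW_col σ τ hσ hτ j
      rw [← hw] at h1
      have h2 := hc j
      calc ∑ i, (g (i,j) - c * w (i,j)) = (∑ i, g (i,j)) - c * ∑ i, w (i,j) := by
            rw [Finset.sum_sub_distrib, Finset.mul_sum]
        _ = 0 := by rw [h1, h2]; ring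
    · intro hzero
      apply hp₁
      have h1 := congrFun hzero p₁
      simp only [Pi.zero_apply] at h1
      linarith
    · rw [Set.ssubset_iff_of_subset]
      · refine ⟨p₀, ?_, ?_⟩
        · simp only [Set.mem_setOf_eq, neg_ne_zero]
          exact hcne
        · simp only [Set.mem_setOf_eq, neg_ne_zero, not_not]
          rw [hwp₀]; ring
      · intro p hp
        simp only [Set.mem_setOf_eq, neg_ne_zero] at hp ⊢
        intro hgp
        apply hp
        have hwp : w p = 0 := by
          by_contra hwp
          exact hsupp p hwp hgp
        rw [hgp, hwp]; ring
  -- gcd argument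
  have hdvd : ∀ p, gz p₀ ∣ gz p := by
    intro p
    have h1 := hgcw p
    have hv := cycW_vals σ τ p
    rw [← hw] at hv
    rcases hv with hv | hv | hv
    · have h2 : (gz p : ℝ) = ((0 : ℤ) : ℝ) := by
        rw [← hgz p, h1, hv]; simp
      rw [Int.cast_injective h2]
      simp
    · have h2 : (gz p : ℝ) = (gz p₀ : ℝ) := by
        rw [← hgz p, ← hgz p₀, h1, hv, mul_one, hcdef]
      rw [Int.cast_injective h2]
    · have h2 : (gz p : ℝ) = ((-gz p₀ : ℤ) : ℝ) := by
        push_cast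
        rw [← hgz p, ← hgz p₀, h1, hv, hcdef]; ring
      rw [Int.cast_injective h2]
      exact dvd_neg.mpr dvd_rfl
  have hu : IsUnit (gz p₀) :=
    isUnit_of_dvd_one (by rw [← hgcd]; exact Finset.dvd_gcd (fun p _ => hdvd p))
  have hc1 : c = 1 ∨ c = -1 := by
    rcases Int.isUnit_iff.mp hu with h1 | h1
    · left; rw [hcdef, hgz p₀, h1]; simp
    · right; rw [hcdef, hgz p₀, h1]; simp
  intro p
  have h1 := hgcw p
  have hv := cycW_vals σ τ p
  rw [← hw] at hv
  rcases hc1 with hc1 | hc1 <;> rcases hv with hv | hv | hv <;>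
    rw [h1, hv, hc1] <;> norm_num

lemma int_of_three (a b c : ℝ) (n : ℕ) (h : a + b + c = (n : ℝ))
    (hb : ∃ z : ℤ, b = z) (hc : ∃ z : ℤ, c = z) : ∃ z : ℤ, a = z := by
  obtain ⟨zb, hb⟩ := hb; obtain ⟨zc, hc⟩ := hc
  exact ⟨(n : ℤ) - zb - zc, by push_cast; linarith⟩

lemma frac_row_mate (y : Fin 3 × Fin 3 → ℝ) (u : Fin 3 → ℕ)
    (hr : ∀ i, ∑ j, y (i, j) = (u i : ℝ)) (p : Fin 3 × Fin 3) (hp : ¬∃ z : ℤ, y p = z) :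
    ∃ q, (¬∃ z : ℤ, y q = z) ∧ q.1 = p.1 ∧ q.2 ≠ p.2 := by
  obtain ⟨i, j⟩ := p
  by_contra hc
  push_neg at hc
  have hz : ∀ j' : Fin 3, j' ≠ j → ∃ z : ℤ, y (i, j') = z := by
    intro j' hj'
    by_contra hyj'
    exact hj' (hc (i, j') (not_exists.mp hyj') rfl)
  have hs := hr i
  rw [Fin.sum_univ_three] at hs
  apply hp
  rcases fin3_cases j with h | h | h <;> subst h
  · exact int_of_three _ _ _ (u i) hs (hz 1 (by decide)) (hz 2 (by decide))
  · exact int_of_three _ _ _ (u i) (by linarith) (hz 0 (by decide)) (hz 2 (by decide))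
  · exact int_of_three _ _ _ (u i) (by linarith) (hz 0 (by decide)) (hz 1 (by decide))

lemma frac_col_mate (y : Fin 3 × Fin 3 → ℝ) (v : Fin 3 → ℕ)
    (hr : ∀ j, ∑ i, y (i, j) = (v j : ℝ)) (p : Fin 3 × Fin 3) (hp : ¬∃ z : ℤ, y p = z) :
    ∃ q, (¬∃ z : ℤ, y q = z) ∧ q.2 = p.2 ∧ q.1 ≠ p.1 := by
  obtain ⟨i, j⟩ := p
  by_contra hc
  push_neg at hc
  have hz : ∀ i' : Fin 3, i' ≠ i → ∃ z : ℤ, y (i', j) = z := by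
    intro i' hi'
    by_contra hyi'
    exact hi' (hc (i', j) (not_exists.mp hyi') rfl)
  have hs := hr j
  rw [Fin.sum_univ_three] at hs
  apply hp
  rcases fin3_cases i with h | h | h <;> subst h
  · exact int_of_three _ _ _ (v j) hs (hz 1 (by decide)) (hz 2 (by decide))
  · exact int_of_three _ _ _ (v j) (by linarith) (hz 0 (by decide)) (hz 2 (by decide))
  · exact int_of_three _ _ _ (v j) (by linarith) (hz 0 (by decide)) (hz 1 (by decide))

lemma extreme_int (u v : Fin 3 → ℕ) (y : Fin 3 × Fin 3 → ℝ)
    (hy : y ∈ (TransportationPolytope u v).extremePoints ℝ) : ∀ p, ∃ z : ℤ, y p = z := by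
  classical
  obtain ⟨hyP, hext⟩ := hy
  obtain ⟨hru, hcv, hnn⟩ := hyP
  by_contra hcon
  push_neg at hcon
  obtain ⟨p₀, hp₀⟩ := hcon
  set S : Fin 3 × Fin 3 → Bool := fun p => decide (¬∃ z : ℤ, y p = z) with hS
  have hSiff : ∀ p, S p = true ↔ ¬∃ z : ℤ, y p = z := by intro p; simp [hS]
  obtain ⟨σ, τ, hσ, hτ, hστ, hmem⟩ := key S
    (⟨p₀, (hSiff p₀).mpr (by push_neg; exact hp₀)⟩)
    (by intro p hp
        obtain ⟨q, h1, h2, h3⟩ := frac_row_mate y u hru p ((hSiff p).mp hp)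
        exact ⟨q, (hSiff q).mpr h1, h2, h3⟩)
    (by intro p hp
        obtain ⟨q, h1, h2, h3⟩ := frac_col_mate y v hcv p ((hSiff p).mp hp)
        exact ⟨q, (hSiff q).mpr h1, h2, h3⟩)
  set w := cycW σ τ with hw
  have hwsupp : ∀ p, w p ≠ 0 → ¬∃ z : ℤ, y p = z := by
    intro p hp
    obtain ⟨hne, hor⟩ := cycW_supp σ τ p hp
    obtain ⟨hm1, hm2⟩ := hmem p.1 hne
    rcases hor with h' | h'
    · have he : (p.1, σ p.1) = p := by rw [← h']
      rw [← he]; exact (hSiff _).mp hm1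
    · have he : (p.1, τ p.1) = p := by rw [← h']
      rw [← he]; exact (hSiff _).mp hm2
  have hypos : ∀ p, w p ≠ 0 → 0 < y p := by
    intro p hp
    rcases (hnn p).lt_or_eq with h | h
    · exact h
    · exact absurd ⟨0, by rw [← h]; simp⟩ (hwsupp p hp)
  set ε := Finset.univ.inf' Finset.univ_nonempty
    (fun p : Fin 3 × Fin 3 => if w p = 0 then 1 else y p) with hε
  have hεpos : 0 < ε := by
    rw [hε, Finset.lt_inf'_iff]
    intro p _
    split_ifs with h
    · norm_num
    · exact hypos p h
  have hεle : ∀ p, w p ≠ 0 → ε ≤ y p := by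
    intro p hp
    have h1 := Finset.inf'_le (fun p : Fin 3 × Fin 3 => if w p = 0 then 1 else y p)
      (Finset.mem_univ p)
    rw [if_neg hp] at h1
    exact h1
  have hmemP : ∀ s : ℝ, s = 1 ∨ s = -1 →
      y + (s * ε) • w ∈ TransportationPolytope u v := by
    intro s hs
    refine ⟨?_, ?_, ?_⟩
    · intro i
      have h1 := cycW_row σ τ i
      rw [← hw] at h1
      simp only [Pi.add_apply, Pi.smul_apply, smul_eq_mul]
      rw [Finset.sum_add_distrib, ← Finset.mul_sum, h1, hru i]; ring
    · intro j
      have h1 := cycW_col σ τ hσ hτ j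
      rw [← hw] at h1
      simp only [Pi.add_apply, Pi.smul_apply, smul_eq_mul]
      rw [Finset.sum_add_distrib, ← Finset.mul_sum, h1, hcv j]; ring
    · intro p
      simp only [Pi.add_apply, Pi.smul_apply, smul_eq_mul]
      have hv := cycW_vals σ τ p
      rw [← hw] at hv
      rcases hv with hv | hv | hv
      · rw [hv]; have := hnn p; linarith
      · have h2 := hεle p (by rw [hv]; norm_num)
        have h3 := hnn p
        rcases hs with h | h <;> rw [hv, h] <;> nlinarith
      · have h2 := hεle p (by rw [hv]; norm_num)
        have h3 := hnn p
        rcases hs with h | h <;> rw [hv, h] <;> nlinarith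
  have h1 := hmemP 1 (Or.inl rfl)
  have h2 := hmemP (-1) (Or.inr rfl)
  have hseg : y ∈ openSegment ℝ (y + ((1:ℝ) * ε) • w) (y + ((-1:ℝ) * ε) • w) := by
    refine ⟨1/2, 1/2, by norm_num, by norm_num, by norm_num, ?_⟩
    funext p
    simp only [Pi.add_apply, Pi.smul_apply, smul_eq_mul]
    ring
  have he1 := hext h1 h2 hseg
  obtain ⟨i₀, hi₀⟩ := Function.ne_iff.mp hστ
  have hw1 : w (i₀, σ i₀) = 1 := cycW_one σ τ i₀ hi₀
  have hcontr := congrFun he1 (i₀, σ i₀)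
  simp only [Pi.add_apply, Pi.smul_apply, smul_eq_mul, hw1] at hcontr
  linarith

lemma step_int (u v : Fin 3 → ℕ) (y : Fin 3 × Fin 3 → ℝ)
    (hyint : ∀ p, ∃ z : ℤ, y p = z)
    (g : Fin 3 × Fin 3 → ℝ) (α : ℝ) (hg : IsCircuitTP g) (hα : 0 < α)
    (hmem : y + α • g ∈ TransportationPolytope u v)
    (hmax : ∀ β : ℝ, α < β → y + β • g ∉ TransportationPolytope u v) :
    ∀ p, ∃ z : ℤ, (y + α • g) p = z := by
  classical
  have hent := circuit_entries g hg
  obtain ⟨hgr, hgc, -, -, -⟩ := hg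
  obtain ⟨hru, hcv, hnn⟩ := hmem
  -- there is a coordinate with g p = -1 hitting zero
  have hhit : ∃ p, g p = -1 ∧ y p = α := by
    by_contra hcon
    push_neg at hcon
    have hpos : ∀ p, g p = -1 → α < y p := by
      intro p hp
      have h1 := hnn p
      simp only [Pi.add_apply, Pi.smul_apply, smul_eq_mul, hp] at h1
      rcases lt_or_eq_of_le (by linarith : α ≤ y p) with h | h
      · exact h
      · exact absurd h.symm (hcon p hp)
    set ε := Finset.univ.inf' Finset.univ_nonempty
      (fun p : Fin 3 × Fin 3 => if g p = -1 then y p - α else 1) with hε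
    have hεpos : 0 < ε := by
      rw [hε, Finset.lt_inf'_iff]
      intro p _
      split_ifs with h
      · linarith [hpos p h]
      · norm_num
    have hεle : ∀ p, g p = -1 → ε ≤ y p - α := by
      intro p hp
      have h1 := Finset.inf'_le (fun p : Fin 3 × Fin 3 => if g p = -1 then y p - α else 1)
        (Finset.mem_univ p)
      rw [if_pos hp] at h1
      exact h1
    apply hmax (α + ε) (by linarith)
    refine ⟨?_, ?_, ?_⟩
    · intro i
      have h2 := hru i
      simp only [Pi.add_apply, Pi.smul_apply, smul_eq_mul] at h2 ⊢
      rw [Finset.sum_add_distrib, ← Finset.mul_sum, hgr i] at h2 ⊢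
      linarith
    · intro j
      have h2 := hcv j
      simp only [Pi.add_apply, Pi.smul_apply, smul_eq_mul] at h2 ⊢
      rw [Finset.sum_add_distrib, ← Finset.mul_sum, hgc j] at h2 ⊢
      linarith
    · intro p
      have h1 := hnn p
      simp only [Pi.add_apply, Pi.smul_apply, smul_eq_mul] at h1 ⊢
      rcases hent p with hv | hv | hv
      · rw [hv] at h1 ⊢; linarith
      · rw [hv] at h1 ⊢; linarith
      · rw [hv] at h1 ⊢
        have := hεle p hv
        linarith
  obtain ⟨p₁, hgp₁, hyp₁⟩ := hhit
  obtain ⟨zα, hzα⟩ := hyint p₁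
  have hαz : α = (zα : ℝ) := by rw [← hyp₁, hzα]
  intro p
  obtain ⟨zy, hzy⟩ := hyint p
  simp only [Pi.add_apply, Pi.smul_apply, smul_eq_mul]
  rcases hent p with hv | hv | hv
  · exact ⟨zy, by rw [hv, hzy]; ring⟩
  · exact ⟨zy + zα, by rw [hv, hzy, hαz]; push_cast; ring⟩
  · exact ⟨zy - zα, by rw [hv, hzy, hαz]; push_cast; ring⟩

lemma fin3_cases' (j : Fin 3) : j = 0 ∨ j = 1 ∨ j = 2 := by revert j; decide

notation "P18" => TransportationPolytope ![1, 2, 2] ![1, 2, 2]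

def xV : Fin 3 × Fin 3 → ℝ := fun p => !![0, 1, 0; 1, 0, 1; 0, 1, 1] p.1 p.2
def gV : Fin 3 × Fin 3 → ℝ := fun p => !![1, -1, 0; -1, 1, 0; 0, 0, 0] p.1 p.2
def zV : Fin 3 × Fin 3 → ℝ := fun p => !![1, 0, 0; 0, 1, 1; 0, 1, 1] p.1 p.2
def gV' : Fin 3 × Fin 3 → ℝ := fun p => !![0, 0, 0; 0, 1, -1; 0, -1, 1] p.1 p.2
def vV : Fin 3 × Fin 3 → ℝ := fun p => !![1, 0, 0; 0, 2, 0; 0, 0, 2] p.1 p.2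

lemma xV_mem : xV ∈ P18 := by
  refine ⟨?_, ?_, ?_⟩
  · intro i
    rcases fin3_cases' i with h | h | h <;> subst h <;>
      norm_num [xV, Fin.sum_univ_three, Matrix.vecHead, Matrix.vecTail]
  · intro j
    rcases fin3_cases' j with h | h | h <;> subst h <;>
      norm_num [xV, Fin.sum_univ_three, Matrix.vecHead, Matrix.vecTail]
  · intro ⟨i, j⟩
    rcases fin3_cases' i with h | h | h <;> subst h <;>
      rcases fin3_cases' j with h | h | h <;> subst h <;>
      norm_num [xV, Matrix.vecHead, Matrix.vecTail]

lemma zV_mem : zV ∈ P18 := by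
  refine ⟨?_, ?_, ?_⟩
  · intro i
    rcases fin3_cases' i with h | h | h <;> subst h <;>
      norm_num [zV, Fin.sum_univ_three, Matrix.vecHead, Matrix.vecTail]
  · intro j
    rcases fin3_cases' j with h | h | h <;> subst h <;>
      norm_num [zV, Fin.sum_univ_three, Matrix.vecHead, Matrix.vecTail]
  · intro ⟨i, j⟩
    rcases fin3_cases' i with h | h | h <;> subst h <;>
      rcases fin3_cases' j with h | h | h <;> subst h <;>
      norm_num [zV, Matrix.vecHead, Matrix.vecTail]

lemma vV_mem : vV ∈ P18 := by
  refine ⟨?_, ?_, ?_⟩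
  · intro i
    rcases fin3_cases' i with h | h | h <;> subst h <;>
      norm_num [vV, Fin.sum_univ_three, Matrix.vecHead, Matrix.vecTail]
  · intro j
    rcases fin3_cases' j with h | h | h <;> subst h <;>
      norm_num [vV, Fin.sum_univ_three, Matrix.vecHead, Matrix.vecTail]
  · intro ⟨i, j⟩
    rcases fin3_cases' i with h | h | h <;> subst h <;>
      rcases fin3_cases' j with h | h | h <;> subst h <;>
      norm_num [vV, Matrix.vecHead, Matrix.vecTail]

lemma xV_add_gV : xV + gV = zV := by
  funext p
  obtain ⟨i, j⟩ := p
  rcases fin3_cases' i with h | h | h <;> subst h <;>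
    rcases fin3_cases' j with h | h | h <;> subst h <;>
    norm_num [xV, gV, zV, Matrix.vecHead, Matrix.vecTail]

lemma zV_add_gV' : zV + gV' = vV := by
  funext p
  obtain ⟨i, j⟩ := p
  rcases fin3_cases' i with h | h | h <;> subst h <;>
    rcases fin3_cases' j with h | h | h <;> subst h <;>
    norm_num [zV, gV', vV, Matrix.vecHead, Matrix.vecTail]

lemma sums_of_mem {y : Fin 3 × Fin 3 → ℝ} (hy : y ∈ P18) :
    y (0,0) + y (0,1) + y (0,2) = 1 ∧ y (1,0) + y (1,1) + y (1,2) = 2 ∧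
    y (2,0) + y (2,1) + y (2,2) = 2 ∧ y (0,0) + y (1,0) + y (2,0) = 1 ∧
    y (0,1) + y (1,1) + y (2,1) = 2 ∧ y (0,2) + y (1,2) + y (2,2) = 2 := by
  obtain ⟨hr, hc, -⟩ := hy
  have r0 := hr 0; have r1 := hr 1; have r2 := hr 2
  have c0 := hc 0; have c1 := hc 1; have c2 := hc 2
  rw [Fin.sum_univ_three] at r0 r1 r2 c0 c1 c2
  norm_num at r0 r1 r2 c0 c1 c2
  exact ⟨r0, r1, r2, c0, c1, c2⟩

lemma xV_unique {y : Fin 3 × Fin 3 → ℝ} (hy : y ∈ P18)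
    (h00 : y (0,0) = 0) (h02 : y (0,2) = 0) (h11 : y (1,1) = 0) (h20 : y (2,0) = 0) :
    y = xV := by
  obtain ⟨r0, r1, r2, c0, c1, c2⟩ := sums_of_mem hy
  funext p
  obtain ⟨i, j⟩ := p
  rcases fin3_cases' i with h | h | h <;> subst h <;>
    rcases fin3_cases' j with h | h | h <;> subst h <;>
    norm_num [xV, Matrix.vecHead, Matrix.vecTail, -Prod.mk_zero_zero, -Prod.mk_one_one] <;> linarith

lemma vV_unique {y : Fin 3 × Fin 3 → ℝ} (hy : y ∈ P18)
    (h01 : y (0,1) = 0) (h02 : y (0,2) = 0) (h10 : y (1,0) = 0) (h12 : y (1,2) = 0)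
    (h20 : y (2,0) = 0) (h21 : y (2,1) = 0) :
    y = vV := by
  obtain ⟨r0, r1, r2, c0, c1, c2⟩ := sums_of_mem hy
  funext p
  obtain ⟨i, j⟩ := p
  rcases fin3_cases' i with h | h | h <;> subst h <;>
    rcases fin3_cases' j with h | h | h <;> subst h <;>
    norm_num [vV, Matrix.vecHead, Matrix.vecTail, -Prod.mk_zero_zero, -Prod.mk_one_one] <;> linarith

lemma xV_extreme : xV ∈ Set.extremePoints ℝ P18 := by
  refine ⟨xV_mem, ?_⟩
  intro x₁ h₁ x₂ h₂ hseg
  obtain ⟨a, b, ha, hb, hab, hsum⟩ := hseg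
  have hzz : ∀ p, xV p = 0 → x₁ p = 0 ∧ x₂ p = 0 := by
    intro p hp
    have h := congrFun hsum p
    simp only [Pi.add_apply, Pi.smul_apply, smul_eq_mul] at h
    rw [hp] at h
    have n1 := h₁.2.2 p
    have n2 := h₂.2.2 p
    constructor <;> nlinarith
  have e1 : x₁ = xV := xV_unique h₁
    (hzz (0,0) (by norm_num [xV])).1 (hzz (0,2) (by norm_num [xV])).1
    (hzz (1,1) (by norm_num [xV, Matrix.vecHead, Matrix.vecTail])).1
    (hzz (2,0) (by norm_num [xV, Matrix.vecHead, Matrix.vecTail])).1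
  have e2 : x₂ = xV := xV_unique h₂
    (hzz (0,0) (by norm_num [xV])).2 (hzz (0,2) (by norm_num [xV])).2
    (hzz (1,1) (by norm_num [xV, Matrix.vecHead, Matrix.vecTail])).2
    (hzz (2,0) (by norm_num [xV, Matrix.vecHead, Matrix.vecTail])).2
  exact e1

lemma vV_extreme : vV ∈ Set.extremePoints ℝ P18 := by
  refine ⟨vV_mem, ?_⟩
  intro x₁ h₁ x₂ h₂ hseg
  obtain ⟨a, b, ha, hb, hab, hsum⟩ := hseg
  have hzz : ∀ p, vV p = 0 → x₁ p = 0 ∧ x₂ p = 0 := by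
    intro p hp
    have h := congrFun hsum p
    simp only [Pi.add_apply, Pi.smul_apply, smul_eq_mul] at h
    rw [hp] at h
    have n1 := h₁.2.2 p
    have n2 := h₂.2.2 p
    constructor <;> nlinarith
  have e1 : x₁ = vV := vV_unique h₁
    (hzz (0,1) (by norm_num [vV])).1 (hzz (0,2) (by norm_num [vV])).1
    (hzz (1,0) (by norm_num [vV, Matrix.vecHead, Matrix.vecTail])).1
    (hzz (1,2) (by norm_num [vV, Matrix.vecHead, Matrix.vecTail])).1
    (hzz (2,0) (by norm_num [vV, Matrix.vecHead, Matrix.vecTail])).1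
    (hzz (2,1) (by norm_num [vV, Matrix.vecHead, Matrix.vecTail])).1
  have e2 : x₂ = vV := vV_unique h₂
    (hzz (0,1) (by norm_num [vV])).2 (hzz (0,2) (by norm_num [vV])).2
    (hzz (1,0) (by norm_num [vV, Matrix.vecHead, Matrix.vecTail])).2
    (hzz (1,2) (by norm_num [vV, Matrix.vecHead, Matrix.vecTail])).2
    (hzz (2,0) (by norm_num [vV, Matrix.vecHead, Matrix.vecTail])).2
    (hzz (2,1) (by norm_num [vV, Matrix.vecHead, Matrix.vecTail])).2
  exact e1

lemma gV_circuit : IsCircuitTP gV := by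
  refine ⟨?_, ?_, ?_, ⟨fun p => !![1, -1, 0; -1, 1, 0; 0, 0, 0] p.1 p.2, ?_, ?_⟩, ?_⟩
  · intro i
    rcases fin3_cases' i with h | h | h <;> subst h <;>
      norm_num [gV, Fin.sum_univ_three, Matrix.vecHead, Matrix.vecTail]
  · intro j
    rcases fin3_cases' j with h | h | h <;> subst h <;>
      norm_num [gV, Fin.sum_univ_three, Matrix.vecHead, Matrix.vecTail]
  · intro h
    have := congrFun h (0, 0)
    norm_num [gV] at this
  · intro ⟨i, j⟩
    rcases fin3_cases' i with h | h | h <;> subst h <;>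
      rcases fin3_cases' j with h | h | h <;> subst h <;>
      norm_num [gV, Matrix.vecHead, Matrix.vecTail]
  · decide
  · rintro ⟨y, hyr, hyc, hy0, hss⟩
    have hzero : ∀ p : Fin 3 × Fin 3, gV p = 0 → y p = 0 := by
      intro p hp
      by_contra h
      have hm : p ∈ {p | -(y p) ≠ 0} := by simp [h]
      have hm2 := hss.1 hm
      simp only [Set.mem_setOf_eq, neg_ne_zero] at hm2
      exact hm2 hp
    have z02 := hzero (0,2) (by norm_num [gV])
    have z12 := hzero (1,2) (by norm_num [gV, Matrix.vecHead, Matrix.vecTail])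
    have z20 := hzero (2,0) (by norm_num [gV, Matrix.vecHead, Matrix.vecTail])
    have z21 := hzero (2,1) (by norm_num [gV, Matrix.vecHead, Matrix.vecTail])
    have z22 := hzero (2,2) (by norm_num [gV, Matrix.vecHead, Matrix.vecTail])
    obtain ⟨p₀, hp₀g, hp₀y⟩ := Set.not_subset.mp hss.2
    simp only [Set.mem_setOf_eq, neg_ne_zero, not_not] at hp₀g hp₀y
    have r0 := hyr 0; have r1 := hyr 1; have c0 := hyc 0; have c1 := hyc 1
    rw [Fin.sum_univ_three] at r0 r1 c0 c1
    have hA : y (0,0) = 0 := by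
      obtain ⟨i, j⟩ := p₀
      rcases fin3_cases' i with h | h | h <;> subst h <;>
        rcases fin3_cases' j with h | h | h <;> subst h <;>
        first
          | linarith
          | (exfalso; exact hp₀g (by norm_num [gV, Matrix.vecHead, Matrix.vecTail]))
    have hB : y (0,1) = 0 := by linarith
    have hC : y (1,0) = 0 := by linarith
    have hD : y (1,1) = 0 := by linarith
    apply hy0
    funext q
    obtain ⟨i, j⟩ := q
    simp only [Pi.zero_apply]
    rcases fin3_cases' i with h | h | h <;> subst h <;>
      rcases fin3_cases' j with h | h | h <;> subst h <;>
      first | exact hA | exact hB | exact hC | exact hD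
            | exact z02 | exact z12 | exact z20 | exact z21 | exact z22

lemma gV'_circuit : IsCircuitTP gV' := by
  refine ⟨?_, ?_, ?_, ⟨fun p => !![0, 0, 0; 0, 1, -1; 0, -1, 1] p.1 p.2, ?_, ?_⟩, ?_⟩
  · intro i
    rcases fin3_cases' i with h | h | h <;> subst h <;>
      norm_num [gV', Fin.sum_univ_three, Matrix.vecHead, Matrix.vecTail]
  · intro j
    rcases fin3_cases' j with h | h | h <;> subst h <;>
      norm_num [gV', Fin.sum_univ_three, Matrix.vecHead, Matrix.vecTail]
  · intro h
    have := congrFun h (1, 1)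
    norm_num [gV', Matrix.vecHead, Matrix.vecTail] at this
  · intro ⟨i, j⟩
    rcases fin3_cases' i with h | h | h <;> subst h <;>
      rcases fin3_cases' j with h | h | h <;> subst h <;>
      norm_num [gV', Matrix.vecHead, Matrix.vecTail]
  · decide
  · rintro ⟨y, hyr, hyc, hy0, hss⟩
    have hzero : ∀ p : Fin 3 × Fin 3, gV' p = 0 → y p = 0 := by
      intro p hp
      by_contra h
      have hm : p ∈ {p | -(y p) ≠ 0} := by simp [h]
      have hm2 := hss.1 hm
      simp only [Set.mem_setOf_eq, neg_ne_zero] at hm2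
      exact hm2 hp
    have z00 := hzero (0,0) (by norm_num [gV'])
    have z01 := hzero (0,1) (by norm_num [gV'])
    have z02 := hzero (0,2) (by norm_num [gV'])
    have z10 := hzero (1,0) (by norm_num [gV', Matrix.vecHead, Matrix.vecTail])
    have z20 := hzero (2,0) (by norm_num [gV', Matrix.vecHead, Matrix.vecTail])
    obtain ⟨p₀, hp₀g, hp₀y⟩ := Set.not_subset.mp hss.2
    simp only [Set.mem_setOf_eq, neg_ne_zero, not_not] at hp₀g hp₀y
    have r1 := hyr 1; have r2 := hyr 2; have c1 := hyc 1; have c2 := hyc 2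
    rw [Fin.sum_univ_three] at r1 r2 c1 c2
    have hA : y (1,1) = 0 := by
      obtain ⟨i, j⟩ := p₀
      rcases fin3_cases' i with h | h | h <;> subst h <;>
        rcases fin3_cases' j with h | h | h <;> subst h <;>
        first
          | linarith
          | (exfalso; exact hp₀g (by norm_num [gV', Matrix.vecHead, Matrix.vecTail]))
    have hB : y (1,2) = 0 := by linarith
    have hC : y (2,1) = 0 := by linarith
    have hD : y (2,2) = 0 := by linarith
    apply hy0
    funext q
    obtain ⟨i, j⟩ := q
    simp only [Pi.zero_apply]
    rcases fin3_cases' i with h | h | h <;> subst h <;>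
      rcases fin3_cases' j with h | h | h <;> subst h <;>
      first | exact hA | exact hB | exact hC | exact hD
            | exact z00 | exact z01 | exact z02 | exact z10 | exact z20

lemma gV_max : ∀ α : ℝ, 1 < α → xV + α • gV ∉ P18 := by
  intro α hα hmem
  have h := hmem.2.2 (0, 1)
  simp only [Pi.add_apply, Pi.smul_apply, smul_eq_mul] at h
  norm_num [xV, gV] at h
  linarith

lemma gV'_max : ∀ α : ℝ, 1 < α → zV + α • gV' ∉ P18 := by
  intro α hα hmem
  have h := hmem.2.2 (1, 2)
  simp only [Pi.add_apply, Pi.smul_apply, smul_eq_mul] at h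
  norm_num [zV, gV', Matrix.vecHead, Matrix.vecTail] at h
  linarith

lemma zV_sub_gV'_mem : zV - gV' ∈ P18 := by
  have he : zV - gV' = (fun p => !![(1:ℝ), 0, 0; 0, 0, 2; 0, 2, 0] p.1 p.2) := by
    funext p
    obtain ⟨i, j⟩ := p
    rcases fin3_cases' i with h | h | h <;> subst h <;>
      rcases fin3_cases' j with h | h | h <;> subst h <;>
      norm_num [zV, gV', Matrix.vecHead, Matrix.vecTail]
  rw [he]
  refine ⟨?_, ?_, ?_⟩
  · intro i
    rcases fin3_cases' i with h | h | h <;> subst h <;>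
      norm_num [Fin.sum_univ_three, Matrix.vecHead, Matrix.vecTail]
  · intro j
    rcases fin3_cases' j with h | h | h <;> subst h <;>
      norm_num [Fin.sum_univ_three, Matrix.vecHead, Matrix.vecTail]
  · intro ⟨i, j⟩
    rcases fin3_cases' i with h | h | h <;> subst h <;>
      rcases fin3_cases' j with h | h | h <;> subst h <;>
      norm_num [Matrix.vecHead, Matrix.vecTail]

lemma zV_not_extreme : zV ∉ Set.extremePoints ℝ P18 := by
  rintro ⟨-, hx⟩
  have m1 : zV + gV' ∈ P18 := by rw [zV_add_gV']; exact vV_mem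
  have m2 : zV - gV' ∈ P18 := zV_sub_gV'_mem
  have hseg : zV ∈ openSegment ℝ (zV + gV') (zV - gV') := by
    refine ⟨1/2, 1/2, by norm_num, by norm_num, by norm_num, ?_⟩
    funext p
    simp only [Pi.add_apply, Pi.sub_apply, Pi.smul_apply, smul_eq_mul]
    ring
  have h1 := hx m1 m2 hseg
  have := congrFun h1 (1, 1)
  simp only [Pi.add_apply] at this
  norm_num [zV, gV', Matrix.vecHead, Matrix.vecTail] at this

end Aux18

theorem transportation_polytope_example :
    let P : Set (Fin 3 × Fin 3 → ℝ) := TransportationPolytope ![1, 2, 2] ![1, 2, 2]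
    let x : Fin 3 × Fin 3 → ℝ := fun p => !![0, 1, 0; 1, 0, 1; 0, 1, 1] p.1 p.2
    let g : Fin 3 × Fin 3 → ℝ := fun p => !![1, -1, 0; -1, 1, 0; 0, 0, 0] p.1 p.2
    x ∈ P.extremePoints ℝ ∧
    IsCircuitTP g ∧
    x + (1 : ℝ) • g ∈ P ∧
    (∀ α : ℝ, 1 < α → x + α • g ∉ P) ∧
    x + g ∉ P.extremePoints ℝ ∧
    (∀ (k : ℕ) (y : Fin (k + 1) → Fin 3 × Fin 3 → ℝ),
      IsCircuitWalk P IsCircuitTP y → IsIntegralWalk y) ∧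
    ¬ (∀ (k : ℕ) (y : Fin (k + 1) → Fin 3 × Fin 3 → ℝ),
      IsCircuitWalk P IsCircuitTP y → IsVertexWalk P y) := by
  intro P x g
  have fin2c : ∀ i : Fin 2, i = 0 ∨ i = 1 := by decide
  refine ⟨xV_extreme, gV_circuit, ?_, gV_max, ?_, ?_, ?_⟩
  · -- x + 1 • g ∈ P
    show xV + (1:ℝ) • gV ∈ P18
    rw [one_smul, xV_add_gV]
    exact zV_mem
  · -- x + g not a vertex
    show xV + gV ∉ Set.extremePoints ℝ P18
    rw [xV_add_gV]
    exact zV_not_extreme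
  · -- every circuit walk is integral
    intro k y hw
    obtain ⟨h0, hlast, hstep⟩ := hw
    have hmemP : ∀ i : Fin (k+1), y i ∈ P18 := by
      intro i
      by_cases hik : (i : ℕ) < k
      · have h := (hstep ⟨(i : ℕ), hik⟩).1
        have he : (⟨(i : ℕ), hik⟩ : Fin k).castSucc = i := by
          apply Fin.ext; rfl
        rwa [he] at h
      · have he : i = Fin.last k := by
          apply Fin.ext
          have h2 := i.isLt
          simp only [Fin.val_last]
          omega
        rw [he]
        exact hlast.1
    intro i
    induction i using Fin.induction with
    | zero => exact extreme_int ![1,2,2] ![1,2,2] (y 0) h0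
    | succ i ih =>
      obtain ⟨hmem, g', α, hcirc, hα, heq, hmax⟩ := hstep i
      rw [heq]
      exact step_int ![1,2,2] ![1,2,2] (y i.castSucc) ih g' α hcirc hα
        (by rw [← heq]; exact hmemP i.succ) hmax
  · -- not every circuit walk is a vertex walk
    intro H
    have hwalk : IsCircuitWalk P18 IsCircuitTP ![xV, zV, vV] := by
      refine ⟨?_, ?_, ?_⟩
      · exact xV_extreme
      · show vV ∈ Set.extremePoints ℝ P18
        exact vV_extreme
      · intro i
        rcases fin2c i with h | h <;> subst h
        · refine ⟨xV_mem, gV, 1, gV_circuit, one_pos, ?_, ?_⟩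
          · show zV = xV + (1:ℝ) • gV
            rw [one_smul, xV_add_gV]
          · intro β hβ
            exact gV_max β hβ
        · refine ⟨zV_mem, gV', 1, gV'_circuit, one_pos, ?_, ?_⟩
          · show vV = zV + (1:ℝ) • gV'
            rw [one_smul, zV_add_gV']
          · intro β hβ
            exact gV'_max β hβ
    have h1 := H 2 ![xV, zV, vV] hwalk 1
    exact zV_not_extreme h1
end

section
/- Let M be a matroid with rank function f on a ground set E with {1, 2, 3, 4} ⊆ E such that {1, 2, 3, 4} is independent in M, and consider the matroid polytope P(f) = {x ∈ ℝ^E : x ≥ 0, Σ_{e ∈ S} x_e ≤ f(S) for all S ⊆ E}, with circuits taken with respect to this constraint system. Then the vector g ∈ ℝ^E with g₁ = 2, g₂ = g₃ = g₄ = −1, and g_e = 0 otherwise is a circuit of P(f); the incidence vector χ of the independent set {2, 3, 4} is a vertex of P(f); the maximal step size from χ along g is α = 1/2; and the resulting point χ + ½g, with coordinates 1, ½, ½, ½ on {1,2,3,4} and 0 elsewhere, is a non-integral point of P(f). In particular, P(f) admits a non-integral circuit walk. -/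
/-!
STATEMENT 19: For a matroid M with rank function f on ground set E ⊇ {1,2,3,4} in which
{1,2,3,4} is independent, the vector g with g₁ = 2, g₂ = g₃ = g₄ = -1 (and 0 elsewhere) is a
circuit of the matroid polytope P(f); the incidence vector χ of {2,3,4} is a vertex of P(f);
the maximal step size from χ along g is α = 1/2; and χ + ½g is a non-integral point of P(f).
In particular, P(f) admits a non-integral circuit walk.
-/

/-- The matroid polytope `P(f) = {x ≥ 0 : ∑_{e ∈ S} x_e ≤ f(S) for all S ⊆ E}`. -/
def MatroidPolytope {E : Type*} [Fintype E] (f : Finset E → ℕ) : Set (E → ℝ) :=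
  {x | (∀ i, 0 ≤ x i) ∧ ∀ S : Finset E, ∑ i ∈ S, x i ≤ (f S : ℝ)}

/-- The rows `B x` of the inequality system defining the matroid polytope, applied to `x`:
nonnegativity rows `-x_i` and rank rows `∑_{i ∈ S} x_i`. -/
def MPIneq {E : Type*} [Fintype E] (x : E → ℝ) : E ⊕ Finset E → ℝ :=
  Sum.elim (fun i => -x i) fun S => ∑ i ∈ S, x i

/-- `g` is a circuit of the inequality system defining the matroid polytope: `g ≠ 0` with
coprime integer components and `B g` support-minimal over `{B x : x ≠ 0}`. -/
def IsCircuitMP {E : Type*} [Fintype E] (g : E → ℝ) : Prop :=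
  g ≠ 0 ∧
  (∃ gz : E → ℤ, (∀ i, g i = (gz i : ℝ)) ∧ Finset.univ.gcd gz = 1) ∧
  ¬ ∃ y : E → ℝ, y ≠ 0 ∧ {r | MPIneq y r ≠ 0} ⊂ {r | MPIneq g r ≠ 0}

lemma MPIneq_smul {E : Type*} [Fintype E] (c : ℝ) (x : E → ℝ) (r : E ⊕ Finset E) :
    MPIneq (c • x) r = c * MPIneq x r := by
  cases r <;> simp [MPIneq, Finset.mul_sum]

lemma sum_bound {E : Type*} [Fintype E] [DecidableEq E]
    (M : Matroid E) (f : Finset E → ℕ)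
    (hf : ∀ S : Finset E,
      IsGreatest {c : ℕ | ∃ I : Finset E, I ⊆ S ∧ M.Indep ↑I ∧ I.card = c} (f S))
    (A : Finset E) (hA : M.Indep ↑A)
    (x : E → ℝ) (hx1 : ∀ i, x i ≤ 1) (hsupp : ∀ i, x i ≠ 0 → i ∈ A)
    (S : Finset E) : ∑ i ∈ S, x i ≤ (f S : ℝ) := by
  have h1 : ∑ i ∈ S, x i = ∑ i ∈ S ∩ A, x i := by
    refine (Finset.sum_subset Finset.inter_subset_left ?_).symm
    intro i hiS hiA
    by_contra h
    exact hiA (Finset.mem_inter.mpr ⟨hiS, hsupp i h⟩)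
  have h2 : ∑ i ∈ S ∩ A, x i ≤ ((S ∩ A).card : ℝ) := by
    calc ∑ i ∈ S ∩ A, x i ≤ ∑ _i ∈ S ∩ A, (1:ℝ) := Finset.sum_le_sum fun i _ => hx1 i
    _ = ((S ∩ A).card : ℝ) := by simp
  have h3 : (S ∩ A).card ≤ f S :=
    (hf S).2 ⟨S ∩ A, Finset.inter_subset_left,
      hA.subset (by exact_mod_cast Finset.coe_subset.mpr Finset.inter_subset_right), rfl⟩
  calc ∑ i ∈ S, x i = _ := h1
  _ ≤ _ := h2
  _ ≤ (f S : ℝ) := by exact_mod_cast h3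

lemma f_single {E : Type*} [Fintype E] [DecidableEq E]
    (M : Matroid E) (f : Finset E → ℕ)
    (hf : ∀ S : Finset E,
      IsGreatest {c : ℕ | ∃ I : Finset E, I ⊆ S ∧ M.Indep ↑I ∧ I.card = c} (f S))
    (i : E) (hi : M.Indep {i}) : f {i} = 1 := by
  have h1 : 1 ≤ f {i} := (hf {i}).2 ⟨{i}, subset_rfl, by simpa using hi, by simp⟩
  have h2 : f {i} ≤ 1 := by
    obtain ⟨I, hIs, _, hcard⟩ := (hf {i}).1
    have := Finset.card_le_card hIs
    simp at this
    omega
  omega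

lemma circuit_g {E : Type*} [Fintype E] [DecidableEq E]
    (e : Fin 4 → E) (he : Function.Injective e) :
    IsCircuitMP (fun i : E =>
      if i = e 0 then (2:ℝ) else if i = e 1 ∨ i = e 2 ∨ i = e 3 then -1 else 0) := by
  have h01 : e 0 ≠ e 1 := fun h => absurd (he h) (by decide)
  have h02 : e 0 ≠ e 2 := fun h => absurd (he h) (by decide)
  have h03 : e 0 ≠ e 3 := fun h => absurd (he h) (by decide)
  have h12 : e 1 ≠ e 2 := fun h => absurd (he h) (by decide)
  have h13 : e 1 ≠ e 3 := fun h => absurd (he h) (by decide)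
  have h23 : e 2 ≠ e 3 := fun h => absurd (he h) (by decide)
  set g : E → ℝ := fun i =>
      if i = e 0 then 2 else if i = e 1 ∨ i = e 2 ∨ i = e 3 then -1 else 0 with hg
  have hg0 : g (e 0) = 2 := by simp [hg]
  have hg1 : g (e 1) = -1 := by simp [hg, h01.symm]
  have hg2 : g (e 2) = -1 := by simp [hg, h02.symm]
  have hg3 : g (e 3) = -1 := by simp [hg, h03.symm]
  have hgo : ∀ i, i ≠ e 0 → i ≠ e 1 → i ≠ e 2 → i ≠ e 3 → g i = 0 := by
    intro i a b c d; simp [hg, a, b, c, d]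
  refine ⟨?_, ?_, ?_⟩
  · intro h
    have := congrFun h (e 0)
    rw [hg0] at this
    norm_num at this
  · refine ⟨fun i => if i = e 0 then 2 else if i = e 1 ∨ i = e 2 ∨ i = e 3 then -1 else 0,
      fun i => by simp only [hg]; split_ifs <;> norm_num, ?_⟩
    set gz : E → ℤ := fun i => if i = e 0 then 2 else if i = e 1 ∨ i = e 2 ∨ i = e 3 then -1 else 0
      with hgz
    have hd : Finset.univ.gcd gz ∣ -1 := by
      have h := Finset.gcd_dvd (Finset.mem_univ (e 1)) (f := gz)
      rwa [show gz (e 1) = -1 by simp [hgz, h01.symm]] at h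
    have hu : IsUnit (Finset.univ.gcd gz) := isUnit_of_dvd_unit hd (IsUnit.neg isUnit_one)
    rw [← Finset.normalize_gcd]
    exact normalize_eq_one.mpr hu
  · rintro ⟨y, hy0, hss⟩
    have hzero : ∀ r, MPIneq g r = 0 → MPIneq y r = 0 := by
      intro r hr
      by_contra h
      exact hss.subset h hr
    have hyo : ∀ i, i ≠ e 0 → i ≠ e 1 → i ≠ e 2 → i ≠ e 3 → y i = 0 := by
      intro i a b c d
      have := hzero (Sum.inl i) (by simp [MPIneq, hgo i a b c d])
      simpa [MPIneq] using this
    have sum3 : ∀ a b c : Fin 4, e a ≠ e b → e a ≠ e c → e b ≠ e c →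
        ∀ x : E → ℝ, ∑ i ∈ ({e a, e b, e c} : Finset E), x i = x (e a) + x (e b) + x (e c) := by
      intro a b c hab hac hbc x
      rw [Finset.sum_insert (by simp [hab, hac]), Finset.sum_insert (by simp [hbc]),
        Finset.sum_singleton]
      ring
    have hy012 : y (e 0) + y (e 1) + y (e 2) = 0 := by
      have hgs : MPIneq g (Sum.inr ({e 0, e 1, e 2} : Finset E)) = 0 := by
        simp only [MPIneq, Sum.elim_inr]
        rw [sum3 0 1 2 h01 h02 h12, hg0, hg1, hg2]; ring
      have := hzero _ hgs
      simpa [MPIneq, sum3 0 1 2 h01 h02 h12] using this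
    have hy013 : y (e 0) + y (e 1) + y (e 3) = 0 := by
      have hgs : MPIneq g (Sum.inr ({e 0, e 1, e 3} : Finset E)) = 0 := by
        simp only [MPIneq, Sum.elim_inr]
        rw [sum3 0 1 3 h01 h03 h13, hg0, hg1, hg3]; ring
      have := hzero _ hgs
      simpa [MPIneq, sum3 0 1 3 h01 h03 h13] using this
    have hy023 : y (e 0) + y (e 2) + y (e 3) = 0 := by
      have hgs : MPIneq g (Sum.inr ({e 0, e 2, e 3} : Finset E)) = 0 := by
        simp only [MPIneq, Sum.elim_inr]
        rw [sum3 0 2 3 h02 h03 h23, hg0, hg2, hg3]; ring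
      have := hzero _ hgs
      simpa [MPIneq, sum3 0 2 3 h02 h03 h23] using this
    set b : ℝ := y (e 1) with hb
    have hyg : y = (-b) • g := by
      funext i
      by_cases hi0 : i = e 0
      · subst hi0; rw [Pi.smul_apply, hg0]; simp only [smul_eq_mul]; linarith
      by_cases hi1 : i = e 1
      · subst hi1; rw [Pi.smul_apply, hg1]; simp only [smul_eq_mul]; linarith
      by_cases hi2 : i = e 2
      · subst hi2; rw [Pi.smul_apply, hg2]; simp only [smul_eq_mul]; linarith
      by_cases hi3 : i = e 3
      · subst hi3; rw [Pi.smul_apply, hg3]; simp only [smul_eq_mul]; linarith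
      · rw [Pi.smul_apply, hgo i hi0 hi1 hi2 hi3, hyo i hi0 hi1 hi2 hi3]; simp
    by_cases hbz : b = 0
    · exact hy0 (by rw [hyg, hbz]; simp)
    · have heqset : {r | MPIneq y r ≠ 0} = {r | MPIneq g r ≠ 0} := by
        ext r
        rw [Set.mem_setOf_eq, Set.mem_setOf_eq, hyg, MPIneq_smul]
        constructor
        · intro h h'; exact h (by rw [h']; ring)
        · intro h h'
          rcases mul_eq_zero.mp h' with h'' | h''
          · exact hbz (by linarith [neg_eq_zero.mp h''])
          · exact h h''
      rw [heqset] at hss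
      exact hss.2 subset_rfl

lemma IsCircuitMP.neg {E : Type*} [Fintype E] {g : E → ℝ} (h : IsCircuitMP g) :
    IsCircuitMP (-g) := by
  obtain ⟨h0, ⟨gz, hgz, hgcd⟩, hmin⟩ := h
  refine ⟨neg_ne_zero.mpr h0, ⟨fun i => -gz i, fun i => by simp [hgz i], ?_⟩, ?_⟩
  · have h1 : Finset.univ.gcd (fun i => -gz i) ∣ Finset.univ.gcd gz :=
      Finset.dvd_gcd fun i _ => dvd_neg.mp (Finset.gcd_dvd (Finset.mem_univ i))
    have h2 : Finset.univ.gcd gz ∣ Finset.univ.gcd (fun i => -gz i) :=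
      Finset.dvd_gcd fun i _ => dvd_neg.mpr (Finset.gcd_dvd (Finset.mem_univ i))
    rw [← hgcd]
    exact dvd_antisymm_of_normalize_eq Finset.normalize_gcd Finset.normalize_gcd h1 h2
  · rintro ⟨y, hy0, hss⟩
    apply hmin
    refine ⟨y, hy0, ?_⟩
    have hset : {r | MPIneq (-g) r ≠ 0} = {r | MPIneq g r ≠ 0} := by
      ext r
      have hm : MPIneq (-g) r = (-1) * MPIneq g r := by
        rw [← MPIneq_smul]; norm_num
      simp [hm]
    rwa [hset] at hss

theorem matroid_polytope_nonintegral_circuit_walk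
    {E : Type*} [Fintype E] [DecidableEq E]
    (M : Matroid E) (hME : M.E = Set.univ)
    (f : Finset E → ℕ)
    (hf : ∀ S : Finset E,
      IsGreatest {c : ℕ | ∃ I : Finset E, I ⊆ S ∧ M.Indep ↑I ∧ I.card = c} (f S))
    (e : Fin 4 → E) (he : Function.Injective e)
    (hind : M.Indep (Set.range e)) :
    let g : E → ℝ := fun i =>
      if i = e 0 then 2 else if i = e 1 ∨ i = e 2 ∨ i = e 3 then -1 else 0
    let χ : E → ℝ := fun i => if i = e 1 ∨ i = e 2 ∨ i = e 3 then 1 else 0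
    IsCircuitMP g ∧
    χ ∈ (MatroidPolytope f).extremePoints ℝ ∧
    χ + (1 / 2 : ℝ) • g ∈ MatroidPolytope f ∧
    (∀ α : ℝ, 1 / 2 < α → χ + α • g ∉ MatroidPolytope f) ∧
    (χ + (1 / 2 : ℝ) • g = fun i =>
      if i = e 0 then 1 else if i = e 1 ∨ i = e 2 ∨ i = e 3 then (1 / 2 : ℝ) else 0) ∧
    (¬ ∀ i, ∃ z : ℤ, (χ + (1 / 2 : ℝ) • g) i = (z : ℝ)) ∧
    ∃ (k : ℕ) (y : Fin (k + 1) → E → ℝ),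
      IsCircuitWalk (MatroidPolytope f) IsCircuitMP y ∧ ¬ IsIntegralWalk y := by
  intro g χ
  have hgdef : g = fun i =>
      if i = e 0 then (2:ℝ) else if i = e 1 ∨ i = e 2 ∨ i = e 3 then -1 else 0 := rfl
  have hχdef : χ = fun i => if i = e 1 ∨ i = e 2 ∨ i = e 3 then (1:ℝ) else 0 := rfl
  have h01 : e 0 ≠ e 1 := fun h => absurd (he h) (by decide)
  have h02 : e 0 ≠ e 2 := fun h => absurd (he h) (by decide)
  have h03 : e 0 ≠ e 3 := fun h => absurd (he h) (by decide)
  have hg0 : g (e 0) = 2 := by rw [hgdef]; simp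
  have hg1 : g (e 1) = -1 := by rw [hgdef]; simp [h01.symm]
  have hχ0 : χ (e 0) = 0 := by rw [hχdef]; simp [h01, h02, h03]
  have hχ1 : χ (e 1) = 1 := by rw [hχdef]; simp
  -- the independent set A = {e0,e1,e2,e3}
  set A : Finset E := {e 0, e 1, e 2, e 3} with hA
  have hAind : M.Indep ↑A := by
    refine hind.subset ?_
    intro x hx
    simp only [hA, Finset.coe_insert, Finset.coe_singleton, Set.mem_insert_iff,
      Set.mem_singleton_iff] at hx
    rcases hx with rfl | rfl | rfl | rfl <;> exact Set.mem_range_self _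
  have hfi : ∀ j : Fin 4, f {e j} = 1 := fun j =>
    f_single M f hf (e j) (hind.subset (Set.singleton_subset_iff.mpr ⟨j, rfl⟩))
  -- the circuit
  have hcirc : IsCircuitMP g := circuit_g e he
  -- χ ∈ P
  have hχmem : χ ∈ MatroidPolytope f := by
    refine ⟨fun i => by rw [hχdef]; dsimp only; split_ifs <;> norm_num, ?_⟩
    refine sum_bound M f hf A hAind χ (fun i => by rw [hχdef]; dsimp only; split_ifs <;> norm_num) ?_
    intro i h
    by_cases hc : i = e 1 ∨ i = e 2 ∨ i = e 3
    · rcases hc with rfl | rfl | rfl <;> simp [hA]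
    · exact absurd (by rw [hχdef]; dsimp only; rw [if_neg hc]) h
  -- χ is a vertex
  have hle1 : ∀ x ∈ MatroidPolytope f, ∀ j : Fin 4, x (e j) ≤ 1 := by
    intro x hx j
    have h := hx.2 {e j}
    rw [Finset.sum_singleton, hfi j] at h
    exact_mod_cast h
  have hχext : χ ∈ (MatroidPolytope f).extremePoints ℝ := by
    refine ⟨hχmem, ?_⟩
    intro x1 hx1 x2 hx2 hseg
    obtain ⟨a, b, ha, hb, hab, hsum⟩ := hseg
    have key : ∀ i, x1 i = χ i ∧ x2 i = χ i := by
      intro i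
      have hsi : a * x1 i + b * x2 i = χ i := by
        have := congrFun hsum i
        simpa using this
      by_cases hc : i = e 1 ∨ i = e 2 ∨ i = e 3
      · have hχi : χ i = 1 := by rw [hχdef]; dsimp only; rw [if_pos hc]
        have hx1i : x1 i ≤ 1 := by rcases hc with rfl | rfl | rfl <;> exact hle1 _ hx1 _
        have hx2i : x2 i ≤ 1 := by rcases hc with rfl | rfl | rfl <;> exact hle1 _ hx2 _
        rw [hχi] at hsi ⊢
        have t1 : a * (1 - x1 i) + b * (1 - x2 i) = 0 := by linear_combination hab - hsi
        have t2 : 0 ≤ a * (1 - x1 i) := mul_nonneg ha.le (by linarith)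
        have t3 : 0 ≤ b * (1 - x2 i) := mul_nonneg hb.le (by linarith)
        constructor
        · have h4 : a * (1 - x1 i) = 0 := by linarith
          have := (mul_eq_zero.mp h4).resolve_left (ne_of_gt ha)
          linarith
        · have h4 : b * (1 - x2 i) = 0 := by linarith
          have := (mul_eq_zero.mp h4).resolve_left (ne_of_gt hb)
          linarith
      · have hχi : χ i = 0 := by rw [hχdef]; dsimp only; rw [if_neg hc]
        rw [hχi] at hsi ⊢
        have t2 : 0 ≤ a * x1 i := mul_nonneg ha.le (hx1.1 i)
        have t3 : 0 ≤ b * x2 i := mul_nonneg hb.le (hx2.1 i)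
        constructor
        · have h4 : a * x1 i = 0 := by linarith
          have := (mul_eq_zero.mp h4).resolve_left (ne_of_gt ha)
          linarith
        · have h4 : b * x2 i = 0 := by linarith
          have := (mul_eq_zero.mp h4).resolve_left (ne_of_gt hb)
          linarith
    exact funext fun i => (key i).1
  -- the midpoint equality
  have heq : χ + (1 / 2 : ℝ) • g = fun i =>
      if i = e 0 then 1 else if i = e 1 ∨ i = e 2 ∨ i = e 3 then (1 / 2 : ℝ) else 0 := by
    funext i
    simp only [Pi.add_apply, Pi.smul_apply, smul_eq_mul]
    by_cases hi0 : i = e 0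
    · subst hi0
      rw [hχ0, hg0, if_pos rfl]
      norm_num
    · rw [if_neg hi0]
      by_cases hc : i = e 1 ∨ i = e 2 ∨ i = e 3
      · have hχi : χ i = 1 := by rw [hχdef]; dsimp only; rw [if_pos hc]
        have hgi : g i = -1 := by rw [hgdef]; dsimp only; rw [if_neg hi0, if_pos hc]
        rw [hχi, hgi, if_pos hc]
        norm_num
      · have hχi : χ i = 0 := by rw [hχdef]; dsimp only; rw [if_neg hc]
        have hgi : g i = 0 := by rw [hgdef]; dsimp only; rw [if_neg hi0, if_neg hc]
        rw [hχi, hgi, if_neg hc]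
        norm_num
  -- χ + ½g ∈ P
  have hmid : χ + (1 / 2 : ℝ) • g ∈ MatroidPolytope f := by
    rw [heq]
    refine ⟨fun i => by beta_reduce; split_ifs <;> norm_num, ?_⟩
    refine sum_bound M f hf A hAind _ (fun i => by beta_reduce; split_ifs <;> norm_num) ?_
    intro i h
    by_cases hi0 : i = e 0
    · subst hi0; simp [hA]
    · by_cases hc : i = e 1 ∨ i = e 2 ∨ i = e 3
      · rcases hc with rfl | rfl | rfl <;> simp [hA]
      · exact absurd (by simp only [if_neg hi0, if_neg hc]) h
  -- maximality of step ½ along g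
  have hmax : ∀ α : ℝ, 1 / 2 < α → χ + α • g ∉ MatroidPolytope f := by
    intro α hα hmem
    have h := hmem.2 {e 0}
    rw [Finset.sum_singleton, hfi 0] at h
    have happ : (χ + α • g) (e 0) = 2 * α := by
      simp only [Pi.add_apply, Pi.smul_apply, smul_eq_mul, hχ0, hg0]
      ring
    rw [happ] at h
    push_cast at h
    linarith
  -- non-integrality
  have hnonint : ¬ ∀ i, ∃ z : ℤ, (χ + (1 / 2 : ℝ) • g) i = (z : ℝ) := by
    intro h
    obtain ⟨z, hz⟩ := h (e 1)
    have hz' : χ (e 1) + (1/2:ℝ) * g (e 1) = (z : ℝ) := by simpa using hz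
    rw [hχ1, hg1] at hz'
    have h2 : (2 * z : ℝ) = 1 := by push_cast; linarith
    have h3 : (2 * z : ℤ) = 1 := by exact_mod_cast h2
    omega
  set Y : Fin 3 → E → ℝ := fun i => if i = 1 then χ + (1/2:ℝ) • g else χ with hYdef
  have hY0 : Y 0 = χ := if_neg (by decide)
  have hYl : Y (Fin.last 2) = χ := if_neg (by decide)
  have hY0c : Y (Fin.castSucc 0) = χ := if_neg (by decide)
  have hY0s : Y (Fin.succ 0) = χ + (1/2:ℝ) • g := if_pos (by decide)
  have hY1c : Y (Fin.castSucc 1) = χ + (1/2:ℝ) • g := if_pos (by decide)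
  have hY1s : Y (Fin.succ 1) = χ := if_neg (by decide)
  have hY1 : Y 1 = χ + (1/2:ℝ) • g := if_pos rfl
  refine ⟨hcirc, hχext, hmid, hmax, heq, hnonint, 2, Y, ?_, ?_⟩
  · refine ⟨hY0 ▸ hχext, hYl ▸ hχext, ?_⟩
    rw [Fin.forall_fin_two]
    constructor
    · refine ⟨hY0c ▸ hχmem, g, 1/2, hcirc, by norm_num, ?_, ?_⟩
      · rw [hY0s, hY0c]
      · intro β hβ
        rw [hY0c]
        exact hmax β hβ
    · refine ⟨hY1c ▸ hmid, -g, 1/2, hcirc.neg, by norm_num, ?_, ?_⟩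
      · rw [hY1s, hY1c, smul_neg]
        exact (add_neg_cancel_right χ ((1/2:ℝ) • g)).symm
      · intro β hβ hmem
        rw [hY1c] at hmem
        have h := hmem.2 {e 1}
        rw [Finset.sum_singleton, hfi 1] at h
        have happ : (χ + (1/2:ℝ) • g + β • (-g)) (e 1) = 1/2 + β := by
          simp only [Pi.add_apply, Pi.smul_apply, Pi.neg_apply, smul_eq_mul, hχ1, hg1]
          ring
        rw [happ] at h
        push_cast at h
        linarith
  · intro h
    obtain ⟨z, hz⟩ := h 1 (e 1)
    rw [hY1] at hz
    have hz' : χ (e 1) + (1/2:ℝ) * g (e 1) = (z : ℝ) := by simpa using hz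
    rw [hχ1, hg1] at hz'
    have h2 : (2 * z : ℝ) = 1 := by push_cast; linarith
    have h3 : (2 * z : ℤ) = 1 := by exact_mod_cast h2
    omega
end
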